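/- arXiv:1408.3718 — 2 statements merged into one kernel-verified Lean document; each statement's English description precedes it below -/
import Mathlib

section
/- Let (K, v) be an Abelian unital po-group with RDP, E = Γ(K, v), and let (H, u) be an Abelian unital po-group with RDP. Then E is strong (H, u)-perfect if and only if there exists a directed Abelian po-group G such that E is isomorphic, as an interval effect algebra, to Γ(H ×ₗ G, (u, 0)). Moreover, in that case G can be chosen to satisfy RDP. -/
open Set

/-! Common vocabulary: interval effect algebras `Γ(K, v) = Set.Icc 0 v` in Abelian
po-groups (`OrderedAddCommGroup`), ideals, decompositions, states, etc., following
Dvurečenskij, "Lexicographic effect algebras". -/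

section Defs

variable {K : Type*} [AddCommGroup K] [PartialOrder K] [IsOrderedAddMonoid K]
variable {H : Type*} [AddCommGroup H] [PartialOrder H] [IsOrderedAddMonoid H]
variable {L : Type*} [AddCommGroup L] [PartialOrder L] [IsOrderedAddMonoid L]

/-- `v` is a strong unit of the po-group `K`. -/
def IsStrongUnit (v : K) : Prop := 0 ≤ v ∧ ∀ g : K, ∃ n : ℕ, g ≤ n • v

/-- The Riesz decomposition property for a po-group. -/
def RDP (K : Type*) [AddCommGroup K] [PartialOrder K] [IsOrderedAddMonoid K] : Prop :=
  ∀ a₁ a₂ b₁ b₂ : K, 0 ≤ a₁ → 0 ≤ a₂ → 0 ≤ b₁ → 0 ≤ b₂ → a₁ + a₂ = b₁ + b₂ →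
    ∃ c₁₁ c₁₂ c₂₁ c₂₂ : K, 0 ≤ c₁₁ ∧ 0 ≤ c₁₂ ∧ 0 ≤ c₂₁ ∧ 0 ≤ c₂₂ ∧
      a₁ = c₁₁ + c₁₂ ∧ a₂ = c₂₁ + c₂₂ ∧ b₁ = c₁₁ + c₂₁ ∧ b₂ = c₁₂ + c₂₂

/-- A poset is an antilattice if any two elements possessing a supremum or an
infimum are comparable. -/
def IsAntilattice (α : Type*) [PartialOrder α] : Prop :=
  ∀ a b : α, ((∃ c, IsLUB {a, b} c) ∨ (∃ c, IsGLB {a, b} c)) → a ≤ b ∨ b ≤ a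

/-- A po-group is directed if any two elements have a common upper bound. -/
def IsDirectedGroup (G : Type*) [AddCommGroup G] [PartialOrder G] [IsOrderedAddMonoid G] : Prop :=
  ∀ a b : G, ∃ c : G, a ≤ c ∧ b ≤ c

/-- An ideal of the interval effect algebra `Γ(K, v)`. -/
def IsIdeal (v : K) (I : Set K) : Prop :=
  I.Nonempty ∧ I ⊆ Icc 0 v ∧
  (∀ x ∈ Icc (0 : K) v, ∀ y ∈ I, x ≤ y → x ∈ I) ∧
  (∀ x ∈ I, ∀ y ∈ I, x + y ≤ v → x + y ∈ I)

/-- An effect subalgebra of `Γ(K, v)`. -/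
def IsEffectSubalgebra (v : K) (F : Set K) : Prop :=
  F ⊆ Icc 0 v ∧ v ∈ F ∧ (∀ x ∈ F, v - x ∈ F) ∧
  ∀ x ∈ F, ∀ y ∈ F, x + y ≤ v → x + y ∈ F

/-- The relation `x ∼_I y`. -/
def SimI (I : Set K) (x y : K) : Prop :=
  ∃ e ∈ I, ∃ f ∈ I, e ≤ x ∧ f ≤ y ∧ x - e = y - f

/-- `x/I ≤ y/I` in the quotient. -/
def QuotLE (v : K) (I : Set K) (x y : K) : Prop :=
  ∃ x₁ ∈ Icc (0 : K) v, SimI I x₁ x ∧ x₁ ≤ y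

/-- `x/I < y/I` in the quotient. -/
def QuotLT (v : K) (I : Set K) (x y : K) : Prop :=
  QuotLE v I x y ∧ ¬ SimI I x y

/-- A strict ideal. -/
def IsStrictIdeal (v : K) (I : Set K) : Prop :=
  IsIdeal v I ∧ ∀ x ∈ Icc (0 : K) v, ∀ y ∈ Icc (0 : K) v, QuotLT v I x y → x < y

/-- The ideal `I₀(a)` of `Γ(K, v)` generated by `a`: all finite sums of elements below `a`. -/
def IdealGen (v a : K) : Set K :=
  {x | x ∈ Icc 0 v ∧ ∃ l : List K, l ≠ [] ∧ (∀ b ∈ l, b ∈ Icc 0 v ∧ b ≤ a) ∧ l.sum = x}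

/-- A prime ideal. -/
def IsPrimeIdeal (v : K) (I : Set K) : Prop :=
  IsIdeal v I ∧
  ∀ x ∈ Icc (0 : K) v, ∀ y ∈ Icc (0 : K) v, IdealGen v x ∩ IdealGen v y ⊆ I → x ∈ I ∨ y ∈ I

/-- A retractive ideal: the canonical projection onto the quotient has a right inverse,
encoded by a map `r : E → E` constant on `∼_I`-classes. -/
def IsRetractiveIdeal (v : K) (I : Set K) : Prop :=
  IsIdeal v I ∧ ∃ r : K → K,
    (∀ x ∈ Icc (0 : K) v, r x ∈ Icc (0 : K) v) ∧ r v = v ∧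
    (∀ x ∈ Icc (0 : K) v, ∀ y ∈ Icc (0 : K) v, x + y ≤ v → r (x + y) = r x + r y) ∧
    (∀ x ∈ Icc (0 : K) v, SimI I (r x) x) ∧
    (∀ x ∈ Icc (0 : K) v, ∀ y ∈ Icc (0 : K) v, SimI I x y → r x = r y)

/-- A lexicographic ideal: a nontrivial ideal that is strict, retractive and prime. -/
def IsLexIdeal (v : K) (I : Set K) : Prop :=
  IsIdeal v I ∧ I ≠ {0} ∧ I ≠ Icc 0 v ∧
    IsStrictIdeal v I ∧ IsRetractiveIdeal v I ∧ IsPrimeIdeal v I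

/-- The set of infinitesimal elements of `Γ(K, v)`. -/
def Infin (v : K) : Set K := {x | x ∈ Icc 0 v ∧ ∀ n : ℕ, n • x ≤ v}

/-- A maximal ideal. -/
def IsMaximalIdeal (v : K) (I : Set K) : Prop :=
  IsIdeal v I ∧ I ≠ Icc 0 v ∧ ∀ J : Set K, IsIdeal v J → I ⊂ J → J = Icc 0 v

/-- A local effect algebra: exactly one maximal ideal. -/
def IsLocal (v : K) : Prop := ∃! I : Set K, IsMaximalIdeal v I

/-- The radical: the intersection of all maximal ideals. -/
def Rad (v : K) : Set K := ⋂₀ {I : Set K | IsMaximalIdeal v I}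

/-- A Riesz ideal. -/
def IsRieszIdeal (v : K) (I : Set K) : Prop :=
  IsIdeal v I ∧ ∀ i ∈ I, ∀ a ∈ Icc (0 : K) v, ∀ b ∈ Icc (0 : K) v, a + b ≤ v → i ≤ a + b →
    ∃ ia ∈ I, ∃ ib ∈ I, ia ≤ a ∧ ib ≤ b ∧ ia + ib ≤ v ∧ i ≤ ia + ib

/-- A (real-valued) state on `Γ(K, v)`. -/
def IsState (v : K) (s : K → ℝ) : Prop :=
  (∀ x ∈ Icc (0 : K) v, s x ∈ Icc (0 : ℝ) 1) ∧ s v = 1 ∧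
  ∀ x ∈ Icc (0 : K) v, ∀ y ∈ Icc (0 : K) v, x + y ≤ v → s (x + y) = s x + s y

/-- `Γ(K, v)` has exactly one state (uniqueness meaning: any two states agree on `Γ(K, v)`). -/
def HasUniqueState (v : K) : Prop :=
  (∃ s : K → ℝ, IsState v s) ∧
  ∀ s s' : K → ℝ, IsState v s → IsState v s' → ∀ x ∈ Icc (0 : K) v, s x = s' x

/-- An `(H, u)`-decomposition of `Γ(K, v)`. -/
def IsDecomp (v : K) (u : H) (E : H → Set K) : Prop :=
  (∀ t ∈ Icc (0 : H) u, (E t).Nonempty) ∧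
  (∀ s ∈ Icc (0 : H) u, ∀ t ∈ Icc (0 : H) u, s ≠ t → E s ∩ E t = ∅) ∧
  (⋃ t ∈ Icc (0 : H) u, E t) = Icc 0 v ∧
  (∀ t ∈ Icc (0 : H) u, (fun x => v - x) '' E t = E (u - t)) ∧
  (∀ s ∈ Icc (0 : H) u, ∀ t ∈ Icc (0 : H) u, ∀ x ∈ E s, ∀ y ∈ E t, x + y ≤ v →
    s + t ≤ u ∧ x + y ∈ E (s + t))

/-- An ordered `(H, u)`-decomposition. -/
def IsOrderedDecomp (v : K) (u : H) (E : H → Set K) : Prop :=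
  IsDecomp v u E ∧
  ∀ s ∈ Icc (0 : H) u, ∀ t ∈ Icc (0 : H) u, s < t → ∀ x ∈ E s, ∀ y ∈ E t, x < y

/-- A directed `(H, u)`-decomposition. -/
def IsDirectedDecomp (v : K) (u : H) (E : H → Set K) : Prop :=
  IsDecomp v u E ∧
  ∀ t ∈ Icc (0 : H) u,
    (∀ x ∈ E t, ∀ y ∈ E t, ∃ z ∈ E t, x ≤ z ∧ y ≤ z) ∧
    (∀ x ∈ E t, ∀ y ∈ E t, ∃ z ∈ E t, z ≤ x ∧ z ≤ y)

/-- A strong `(H, u)`-decomposition, with witnessing elements `c t ∈ E t`. -/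
def IsStrongDecomp (v : K) (u : H) (E : H → Set K) (c : H → K) : Prop :=
  IsOrderedDecomp v u E ∧ IsDirectedDecomp v u E ∧
  (∀ t ∈ Icc (0 : H) u, c t ∈ E t) ∧
  (∀ s ∈ Icc (0 : H) u, ∀ t ∈ Icc (0 : H) u, s + t ≤ u → c (s + t) = c s + c t) ∧
  c u = v

/-- A strong `(H, u)`-perfect effect algebra. -/
def IsStrongPerfect (v : K) (u : H) : Prop :=
  ∃ (E : H → Set K) (c : H → K), IsStrongDecomp v u E c

/-- A homomorphism of interval effect algebras `Γ(K, v) → Γ(L, w)`. -/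
def IsEffectHom (v : K) (w : L) (f : K → L) : Prop :=
  (∀ x ∈ Icc (0 : K) v, f x ∈ Icc (0 : L) w) ∧ f v = w ∧
  ∀ x ∈ Icc (0 : K) v, ∀ y ∈ Icc (0 : K) v, x + y ≤ v →
    f x + f y ≤ w ∧ f (x + y) = f x + f y

/-- An isomorphism of interval effect algebras `Γ(K, v) ≅ Γ(L, w)`. -/
def IsEffectIso (v : K) (w : L) (f : K → L) : Prop :=
  IsEffectHom v w f ∧ ∃ g : L → K, IsEffectHom w v g ∧
    (∀ x ∈ Icc (0 : K) v, g (f x) = x) ∧ (∀ y ∈ Icc (0 : L) w, f (g y) = y)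

/-- An o-ideal of a po-group: a directed convex subgroup. -/
def IsOIdeal (H : Type*) [AddCommGroup H] [PartialOrder H] [IsOrderedAddMonoid H] (S : AddSubgroup H) : Prop :=
  (∀ a ∈ S, ∀ b ∈ S, ∃ c ∈ S, a ≤ c ∧ b ≤ c) ∧
  (∀ a ∈ S, ∀ b ∈ S, ∀ x : H, a ≤ x → x ≤ b → x ∈ S)

/-- A simple po-group: the only o-ideals are `⊥` and `⊤`. -/
def IsSimplePoGroup (H : Type*) [AddCommGroup H] [PartialOrder H] [IsOrderedAddMonoid H] : Prop :=
  ∀ S : AddSubgroup H, IsOIdeal H S → S = ⊥ ∨ S = ⊤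

/-- `Γ(H, u)` is Archimedean: its only infinitesimal element is `0`. -/
def GammaArchimedean (u : H) : Prop :=
  ∀ t ∈ Icc (0 : H) u, (∀ n : ℕ, n • t ≤ u) → t = 0

/-- `φ : K → H` witnesses an isomorphism of the quotient effect algebra `Γ(K,v)/I`
onto `Γ(H, u)`: it is an additive surjection onto `[0,u]` whose fibers on `Γ(K,v)`
are exactly the `∼_I`-classes, and it transports the quotient order. -/
def QuotIsoWitness (v : K) (I : Set K) (u : H) (φ : K → H) : Prop :=
  (∀ x ∈ Icc (0 : K) v, φ x ∈ Icc (0 : H) u) ∧ φ v = u ∧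
  (∀ x ∈ Icc (0 : K) v, ∀ y ∈ Icc (0 : K) v, x + y ≤ v → φ (x + y) = φ x + φ y) ∧
  (∀ t ∈ Icc (0 : H) u, ∃ x ∈ Icc (0 : K) v, φ x = t) ∧
  (∀ x ∈ Icc (0 : K) v, ∀ y ∈ Icc (0 : K) v, (φ x = φ y ↔ SimI I x y)) ∧
  (∀ x ∈ Icc (0 : K) v, ∀ y ∈ Icc (0 : K) v, (φ x ≤ φ y ↔ QuotLE v I x y))

/-- The quotient effect algebra `Γ(K,v)/I` is isomorphic to `Γ(H, u)`. -/
def IsQuotIso (v : K) (I : Set K) (u : H) : Prop :=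
  ∃ φ : K → H, QuotIsoWitness v I u φ

/-- The sub-effect algebra with carrier `S ⊆ Γ(K, v)` and unit `v` is isomorphic
to the interval effect algebra `Γ(L, w)`. -/
def IsSubalgebraIso (v : K) (S : Set K) (w : L) : Prop :=
  ∃ f : K → L,
    (∀ x ∈ S, f x ∈ Icc (0 : L) w) ∧ f v = w ∧
    (∀ x ∈ S, ∀ y ∈ S, x + y ≤ v → f x + f y ≤ w ∧ f (x + y) = f x + f y) ∧
    ∃ g : L → K,
      (∀ a ∈ Icc (0 : L) w, g a ∈ S) ∧ g w = v ∧
      (∀ a ∈ Icc (0 : L) w, ∀ b ∈ Icc (0 : L) w, a + b ≤ w →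
        g a + g b ≤ v ∧ g (a + b) = g a + g b) ∧
      (∀ x ∈ S, g (f x) = x) ∧ (∀ a ∈ Icc (0 : L) w, f (g a) = a)

/-- An `(H, u)`-valued state on `Γ(K, v)`, as a map of subtypes. -/
def IsSubValuedState (v : K) (u : H) (s : Icc (0 : K) v → Icc (0 : H) u) : Prop :=
  (∀ x : Icc (0 : K) v, (x : K) = v → ((s x : H) = u)) ∧
  (∀ x y z : Icc (0 : K) v, (z : K) = (x : K) + (y : K) →
    ((s z : H) = (s x : H) + (s y : H))) ∧
  Function.Surjective s

/-- An `(H, u)`-decomposition of `Γ(K, v)`, as a family indexed by the subtype `[0,u]`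
of sets of the subtype `Γ(K, v)`. -/
def IsSubDecomp (v : K) (u : H) (E : Icc (0 : H) u → Set (Icc (0 : K) v)) : Prop :=
  (∀ t, (E t).Nonempty) ∧
  (∀ s t : Icc (0 : H) u, s ≠ t → E s ∩ E t = ∅) ∧
  (⋃ t, E t) = Set.univ ∧
  (∀ t t' : Icc (0 : H) u, (t' : H) = u - t →
    ∀ x x' : Icc (0 : K) v, (x' : K) = v - x → (x ∈ E t ↔ x' ∈ E t')) ∧
  (∀ s t : Icc (0 : H) u, ∀ x y z : Icc (0 : K) v, x ∈ E s → y ∈ E t →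
    (z : K) = (x : K) + (y : K) →
    ∃ w : Icc (0 : H) u, (w : H) = (s : H) + (t : H) ∧ z ∈ E w)

end Defs

universe x y


theorem backward_aux {K : Type x} {H : Type y}
    [AddCommGroup K] [PartialOrder K] [IsOrderedAddMonoid K] [AddCommGroup H] [PartialOrder H] [IsOrderedAddMonoid H]
    (v : K) (u : H) (hv0 : (0:K) ≤ v)
    {G : Type*} [AddCommGroup G] [PartialOrder G] [IsOrderedAddMonoid G] (hG : IsDirectedGroup G)
    (f : K → H ×ₗ G) (hf : IsEffectIso v (toLex (u, (0 : G))) f) :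
    IsStrongPerfect v u := by
  classical
  obtain ⟨⟨hfmem, hfv, hfadd⟩, g, ⟨hgmem, hgw, hgadd⟩, hgf, hfg⟩ := hf
  have hvI : v ∈ Icc (0:K) v := ⟨hv0, le_rfl⟩
  have hwI : toLex (u, (0:G)) ∈ Icc (0:H ×ₗ G) (toLex (u, (0:G))) := by
    have := hfmem v hvI; rwa [hfv] at this
  have h0w : (0 : H ×ₗ G) ≤ toLex (u, (0:G)) := hwI.1
  have hcomp : ∀ p, p ∈ Icc (0:H ×ₗ G) (toLex (u, (0:G))) → (ofLex p).1 ∈ Icc (0:H) u := by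
    intro p hp
    constructor
    · rcases (Prod.Lex.toLex_le_toLex (x := ofLex (0:H ×ₗ G)) (y := ofLex p)).1 hp.1 with h | h
      · exact le_of_lt h
      · exact le_of_eq h.1
    · rcases (Prod.Lex.toLex_le_toLex (x := ofLex p) (y := (u, (0:G)))).1 hp.2 with h | h
      · exact le_of_lt h
      · exact le_of_eq h.1
  have hmono_f : ∀ x ∈ Icc (0:K) v, ∀ y ∈ Icc (0:K) v, x ≤ y → f x ≤ f y := by
    intro x hx y hy hxy
    have hyx : y - x ∈ Icc (0:K) v := ⟨sub_nonneg.2 hxy, le_trans (sub_le_self _ hx.1) hy.2⟩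
    have he : x + (y - x) = y := by abel
    obtain ⟨-, heq⟩ := hfadd x hx (y - x) hyx (by rw [he]; exact hy.2)
    have h2 : f y = f x + f (y - x) := by rw [← heq, he]
    rw [h2]
    exact le_add_of_nonneg_right (hfmem _ hyx).1
  have hmono_g : ∀ p ∈ Icc (0:H ×ₗ G) (toLex (u, (0:G))), ∀ q ∈ Icc (0:H ×ₗ G) (toLex (u, (0:G))),
      p ≤ q → g p ≤ g q := by
    intro p hp q hq hpq
    have hqp : q - p ∈ Icc (0:H ×ₗ G) (toLex (u, (0:G))) :=
      ⟨sub_nonneg.2 hpq, le_trans (sub_le_self _ hp.1) hq.2⟩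
    have he : p + (q - p) = q := by abel
    obtain ⟨-, heq⟩ := hgadd p hp (q - p) hqp (by rw [he]; exact hq.2)
    have h2 : g q = g p + g (q - p) := by rw [← heq, he]
    rw [h2]
    exact le_add_of_nonneg_right (hgmem _ hqp).1
  have h0I : (0:K) ∈ Icc (0:K) v := ⟨le_rfl, hv0⟩
  have hf0 : f 0 = 0 := by
    have := (hfadd 0 h0I 0 h0I (by simpa using hv0)).2
    rw [add_zero] at this
    exact left_eq_add.1 this
  -- the decomposition and the witnesses
  set E : H → Set K := fun t => {x | x ∈ Icc (0:K) v ∧ (ofLex (f x)).1 = t} with hEdef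
  set c : H → K := fun t => g (toLex (t, (0:G))) with hcdef
  have hmemE : ∀ t x, x ∈ E t ↔ (x ∈ Icc (0:K) v ∧ (ofLex (f x)).1 = t) := by
    intro t x; rw [hEdef]; exact Iff.rfl
  have hfib : ∀ t ∈ Icc (0:H) u, toLex (t, (0:G)) ∈ Icc (0:H ×ₗ G) (toLex (u, (0:G))) := by
    intro t ht
    constructor
    · refine (Prod.Lex.toLex_le_toLex (x := ofLex (0:H ×ₗ G)) (y := (t, (0:G)))).2 ?_
      rcases eq_or_lt_of_le ht.1 with h | h
      · exact Or.inr ⟨h, le_rfl⟩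
      · exact Or.inl h
    · refine (Prod.Lex.toLex_le_toLex (x := (t, (0:G))) (y := (u, (0:G)))).2 ?_
      rcases eq_or_lt_of_le ht.2 with h | h
      · exact Or.inr ⟨h, le_rfl⟩
      · exact Or.inl h
  have hcE : ∀ t ∈ Icc (0:H) u, c t ∈ E t := by
    intro t ht
    rw [hmemE]
    refine ⟨hgmem _ (hfib t ht), ?_⟩
    rw [hfg _ (hfib t ht)]
    rfl
  have hkey : ∀ x ∈ Icc (0:K) v, f (v - x) = toLex (u, (0:G)) - f x := by
    intro x hx
    have hvx : v - x ∈ Icc (0:K) v := ⟨sub_nonneg.2 hx.2, sub_le_self _ hx.1⟩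
    have he : x + (v - x) = v := by abel
    have h2 := (hfadd x hx (v - x) hvx (by rw [he])).2
    rw [he, hfv] at h2
    exact eq_sub_of_add_eq (by rw [add_comm]; exact h2.symm)
  have hdecomp : IsDecomp v u E := by
    refine ⟨fun t ht => ⟨c t, hcE t ht⟩, ?_, ?_, ?_, ?_⟩
    · intro s hs t ht hst
      ext z
      simp only [Set.mem_inter_iff, Set.mem_empty_iff_false, iff_false, not_and]
      intro h1 h2
      rw [hmemE] at h1 h2
      exact hst (h1.2.symm.trans h2.2)
    · ext z
      simp only [Set.mem_iUnion, exists_prop]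
      constructor
      · rintro ⟨t, _, hz⟩
        exact ((hmemE t z).1 hz).1
      · intro hz
        exact ⟨(ofLex (f z)).1, hcomp _ (hfmem _ hz), (hmemE _ _).2 ⟨hz, rfl⟩⟩
    · intro t ht
      ext z
      simp only [Set.mem_image]
      constructor
      · rintro ⟨a, ha, rfl⟩
        rw [hmemE] at ha
        have haI := ha.1
        rw [hmemE]
        refine ⟨⟨sub_nonneg.2 haI.2, sub_le_self _ haI.1⟩, ?_⟩
        rw [hkey a haI]
        show u - (ofLex (f a)).1 = u - t
        rw [ha.2]
      · intro hz
        rw [hmemE] at hz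
        have hzI := hz.1
        refine ⟨v - z, ?_, by abel⟩
        rw [hmemE]
        refine ⟨⟨sub_nonneg.2 hzI.2, sub_le_self _ hzI.1⟩, ?_⟩
        rw [hkey z hzI]
        show u - (ofLex (f z)).1 = t
        rw [hz.2]
        abel
    · intro s hs t ht a ha b hb hab
      rw [hmemE] at ha hb
      have habI : a + b ∈ Icc (0:K) v := ⟨add_nonneg ha.1.1 hb.1.1, hab⟩
      have heq := (hfadd a ha.1 b hb.1 hab).2
      have h1 : (ofLex (f (a + b))).1 = s + t := by
        rw [heq]
        show (ofLex (f a)).1 + (ofLex (f b)).1 = s + t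
        rw [ha.2, hb.2]
      have h2 := hcomp _ (hfmem _ habI)
      rw [h1] at h2
      exact ⟨h2.2, (hmemE _ _).2 ⟨habI, h1⟩⟩
  have hvE : v ∈ E u := by
    rw [hmemE]
    exact ⟨hvI, by rw [hfv]; rfl⟩
  have hord : ∀ s ∈ Icc (0:H) u, ∀ t ∈ Icc (0:H) u, s < t → ∀ x ∈ E s, ∀ y ∈ E t, x < y := by
    intro s hs t ht hst x hx y hy
    rw [hmemE] at hx hy
    have hlt : f x < f y := by
      refine (Prod.Lex.toLex_lt_toLex (x := ofLex (f x)) (y := ofLex (f y))).2 (Or.inl ?_)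
      rw [hx.2, hy.2]; exact hst
    have hle : x ≤ y := by
      have := hmono_g _ (hfmem _ hx.1) _ (hfmem _ hy.1) (le_of_lt hlt)
      rwa [hgf _ hx.1, hgf _ hy.1] at this
    refine lt_of_le_of_ne hle ?_
    intro h
    rw [h] at hlt
    exact lt_irrefl _ hlt
  have hglex : ∀ t ∈ Icc (0:H) u, ∀ d : G,
      toLex (t, d) ∈ Icc (0:H ×ₗ G) (toLex (u, (0:G))) → g (toLex (t, d)) ∈ E t := by
    intro t ht d hd
    rw [hmemE]
    exact ⟨hgmem _ hd, by rw [hfg _ hd]; rfl⟩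
  have hdirE : ∀ t ∈ Icc (0:H) u,
      (∀ x ∈ E t, ∀ y ∈ E t, ∃ z ∈ E t, x ≤ z ∧ y ≤ z) ∧
      (∀ x ∈ E t, ∀ y ∈ E t, ∃ z ∈ E t, z ≤ x ∧ z ≤ y) := by
    intro t ht
    constructor
    · intro x hx y hy
      rw [hmemE] at hx hy
      rcases eq_or_lt_of_le ht.2 with htu | htu
      · subst htu
        exact ⟨v, hvE, hx.1.2, hy.1.2⟩
      · obtain ⟨d1, hd1a, hd1b⟩ := hG (ofLex (f x)).2 (ofLex (f y)).2
        obtain ⟨d2, hd2a, hd2b⟩ := hG d1 0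
        have hmem : toLex (t, d2) ∈ Icc (0:H ×ₗ G) (toLex (u, (0:G))) := by
          constructor
          · refine (Prod.Lex.toLex_le_toLex (x := ofLex (0:H ×ₗ G)) (y := (t, d2))).2 ?_
            rcases eq_or_lt_of_le ht.1 with h0 | h0
            · exact Or.inr ⟨h0, hd2b⟩
            · exact Or.inl h0
          · exact (Prod.Lex.toLex_le_toLex (x := (t, d2)) (y := (u, (0:G)))).2 (Or.inl htu)
        refine ⟨g (toLex (t, d2)), hglex t ht d2 hmem, ?_, ?_⟩
        · have hfle : f x ≤ toLex (t, d2) :=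
            (Prod.Lex.toLex_le_toLex (x := ofLex (f x)) (y := (t, d2))).2 (Or.inr ⟨hx.2, le_trans hd1a hd2a⟩)
          have := hmono_g _ (hfmem _ hx.1) _ hmem hfle
          rwa [hgf _ hx.1] at this
        · have hfle : f y ≤ toLex (t, d2) :=
            (Prod.Lex.toLex_le_toLex (x := ofLex (f y)) (y := (t, d2))).2 (Or.inr ⟨hy.2, le_trans hd1b hd2a⟩)
          have := hmono_g _ (hfmem _ hy.1) _ hmem hfle
          rwa [hgf _ hy.1] at this
    · intro x hx y hy
      rw [hmemE] at hx hy
      rcases eq_or_lt_of_le ht.1 with ht0 | ht0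
      · have h0E : (0:K) ∈ E t := by
          rw [hmemE]
          refine ⟨h0I, ?_⟩
          rw [hf0, ← ht0]
          rfl
        exact ⟨0, h0E, hx.1.1, hy.1.1⟩
      · obtain ⟨d1, hd1a, hd1b⟩ := hG (-(ofLex (f x)).2) (-(ofLex (f y)).2)
        obtain ⟨d2, hd2a, hd2b⟩ := hG d1 0
        have hmem : toLex (t, -d2) ∈ Icc (0:H ×ₗ G) (toLex (u, (0:G))) := by
          constructor
          · exact (Prod.Lex.toLex_le_toLex (x := ofLex (0:H ×ₗ G)) (y := (t, -d2))).2 (Or.inl ht0)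
          · refine (Prod.Lex.toLex_le_toLex (x := (t, -d2)) (y := (u, (0:G)))).2 ?_
            rcases eq_or_lt_of_le ht.2 with htu | htu
            · exact Or.inr ⟨htu, neg_nonpos.2 hd2b⟩
            · exact Or.inl htu
        refine ⟨g (toLex (t, -d2)), hglex t ht (-d2) hmem, ?_, ?_⟩
        · have hfle : toLex (t, -d2) ≤ f x :=
            (Prod.Lex.toLex_le_toLex (x := (t, -d2)) (y := ofLex (f x))).2
              (Or.inr ⟨hx.2.symm, neg_le.1 (le_trans hd1a hd2a)⟩)
          have := hmono_g _ hmem _ (hfmem _ hx.1) hfle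
          rwa [hgf _ hx.1] at this
        · have hfle : toLex (t, -d2) ≤ f y :=
            (Prod.Lex.toLex_le_toLex (x := (t, -d2)) (y := ofLex (f y))).2
              (Or.inr ⟨hy.2.symm, neg_le.1 (le_trans hd1b hd2a)⟩)
          have := hmono_g _ hmem _ (hfmem _ hy.1) hfle
          rwa [hgf _ hy.1] at this
  have hcadd : ∀ s ∈ Icc (0:H) u, ∀ t ∈ Icc (0:H) u, s + t ≤ u → c (s + t) = c s + c t := by
    intro s hs t ht hstu
    have hstI : s + t ∈ Icc (0:H) u := ⟨add_nonneg hs.1 ht.1, hstu⟩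
    have hsum : toLex (s, (0:G)) + toLex (t, (0:G)) = toLex (s + t, (0:G)) := by
      show toLex (s + t, (0:G) + 0) = toLex (s + t, (0:G))
      rw [add_zero]
    have h2 := (hgadd _ (hfib s hs) _ (hfib t ht) (by rw [hsum]; exact (hfib _ hstI).2)).2
    rw [hsum] at h2
    exact h2
  have hcu : c u = v := by
    show g (toLex (u, (0:G))) = v
    rw [← hfv, hgf v hvI]
  exact ⟨E, c, ⟨hdecomp, hord⟩, ⟨hdecomp, hdirE⟩, hcE, hcadd, hcu⟩


instance uliftOrderedAddCommGroup {A : Type x} [AddCommGroup A] [PartialOrder A] [IsOrderedAddMonoid A] :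
    IsOrderedAddMonoid (ULift.{y} A) :=
  { add_le_add_left := by
      intro a b h c
      exact add_le_add_left (α := A) h _ }

theorem forward_aux {K : Type x} {H : Type y}
    [AddCommGroup K] [PartialOrder K] [IsOrderedAddMonoid K] [AddCommGroup H] [PartialOrder H] [IsOrderedAddMonoid H]
    (v : K) (u : H) (hK : RDP K) (h0u : (0:H) ≤ u) (hsp : IsStrongPerfect v u) :
    ∃ (G : Type (max x y)) (_ : AddCommGroup G) (_ : PartialOrder G) (_ : IsOrderedAddMonoid G), IsDirectedGroup G ∧ RDP G ∧
      ∃ f : K → H ×ₗ G, IsEffectIso v (toLex (u, (0 : G))) f := by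
  classical
  obtain ⟨E, c, ⟨⟨⟨hne, hdisj, hunion, hcompl, hadd⟩, hord⟩, ⟨-, hdir⟩, hcmem, hcadd, hcu⟩⟩ := hsp
  have h0Iu : (0:H) ∈ Icc (0:H) u := ⟨le_rfl, h0u⟩
  have huIu : u ∈ Icc (0:H) u := ⟨h0u, le_rfl⟩
  have hc0 : c 0 = 0 := by
    have h2 := hcadd 0 h0Iu 0 h0Iu (by simpa using h0u)
    rw [add_zero] at h2
    exact left_eq_add.1 h2
  have h0E0 : (0:K) ∈ E 0 := by rw [← hc0]; exact hcmem 0 h0Iu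
  have hvEu : v ∈ E u := by rw [← hcu]; exact hcmem u huIu
  have hEsub : ∀ {t z}, t ∈ Icc (0:H) u → z ∈ E t → z ∈ Icc (0:K) v := by
    intro t z ht hz
    rw [← hunion]
    exact Set.mem_biUnion ht hz
  have hmemE : ∀ z ∈ Icc (0:K) v, ∃ t, t ∈ Icc (0:H) u ∧ z ∈ E t := by
    intro z hz
    rw [← hunion] at hz
    simpa using hz
  have huniq : ∀ {s t z}, s ∈ Icc (0:H) u → t ∈ Icc (0:H) u → z ∈ E s → z ∈ E t → s = t := by
    intro s t z hs ht hzs hzt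
    by_contra hne'
    have hmem : z ∈ E s ∩ E t := ⟨hzs, hzt⟩
    rw [hdisj s hs t ht hne'] at hmem
    exact hmem
  set τ : K → H := fun z => if h : ∃ t, t ∈ Icc (0:H) u ∧ z ∈ E t then h.choose else 0 with hτdef
  have hτ : ∀ z ∈ Icc (0:K) v, τ z ∈ Icc (0:H) u ∧ z ∈ E (τ z) := by
    intro z hz
    have hex := hmemE z hz
    show (if h : ∃ t, t ∈ Icc (0:H) u ∧ z ∈ E t then h.choose else 0) ∈ Icc (0:H) u ∧
      z ∈ E (if h : ∃ t, t ∈ Icc (0:H) u ∧ z ∈ E t then h.choose else 0)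
    rw [dif_pos hex]
    exact hex.choose_spec
  have hτu : ∀ {z t}, t ∈ Icc (0:H) u → z ∈ E t → τ z = t := by
    intro z t ht hz
    have h1 := hτ z (hEsub ht hz)
    exact huniq h1.1 ht h1.2 hz
  have hlt0 : ∀ {t e z}, t ∈ Icc (0:H) u → (0:H) < t → e ∈ E 0 → z ∈ E t → e < z := by
    intro t e z ht h0t he hz
    exact hord 0 h0Iu t ht h0t e he z hz
  have hadd0 : ∀ {t z e}, t ∈ Icc (0:H) u → z ∈ E t → e ∈ E 0 → z + e ≤ v → z + e ∈ E t := by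
    intro t z e ht hz he hle
    have h2 := (hadd t ht 0 h0Iu z hz e he hle).2
    rwa [add_zero] at h2
  have hdiff : ∀ {t z w}, t ∈ Icc (0:H) u → z ∈ E t → w ∈ E t → w ≤ z → z - w ∈ E 0 := by
    intro t z w ht hz hw hwz
    have hzI := hEsub ht hz
    have hdI : z - w ∈ Icc (0:K) v :=
      ⟨sub_nonneg.2 hwz, le_trans (sub_le_self _ (hEsub ht hw).1) hzI.2⟩
    obtain ⟨s, hs, hsE⟩ := hmemE _ hdI
    have he : w + (z - w) = z := by abel
    have h2 := hadd t ht s hs w hw (z - w) hsE (by rw [he]; exact hzI.2)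
    rw [he] at h2
    have hts : t = t + s := huniq ht ⟨add_nonneg ht.1 hs.1, h2.1⟩ hz h2.2
    have hs0 : s = 0 := by
      have h4 : t + s = t + 0 := by rw [add_zero]; exact hts.symm
      exact add_left_cancel h4
    rwa [hs0] at hsE
  have hcompl' : ∀ {t z}, t ∈ Icc (0:H) u → z ∈ E t → v - z ∈ E (u - t) := by
    intro t z ht hz
    rw [← hcompl t ht]
    exact ⟨z, hz, rfl⟩
  have hIuc : ∀ {t}, t ∈ Icc (0:H) u → u - t ∈ Icc (0:H) u :=
    fun ht => ⟨sub_nonneg.2 ht.2, sub_le_self _ ht.1⟩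
  rcases eq_or_lt_of_le h0u with hu0 | h0u'
  · -- degenerate case u = 0
    have hv0 : v = 0 := by rw [← hcu, ← hu0, hc0]
    subst hv0
    have hbot : ∀ w : ↥(⊥ : AddSubgroup K), w = 0 := fun w => Subtype.ext (by
      rw [ZeroMemClass.coe_zero]
      exact AddSubgroup.mem_bot.mp w.2)
    have hbotU : ∀ w : ULift.{y} ↥(⊥ : AddSubgroup K), w = 0 := fun w => ULift.ext _ _ (hbot w.down)
    refine ⟨ULift.{y} ↥(⊥ : AddSubgroup K), inferInstance, inferInstance, inferInstance, ?_, ?_, fun _ => 0, ?_⟩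
    · intro a b
      exact ⟨0, le_of_eq (hbotU a), le_of_eq (hbotU b)⟩
    · intro a₁ a₂ b₁ b₂ _ _ _ _ _
      refine ⟨0, 0, 0, 0, le_rfl, le_rfl, le_rfl, le_rfl, ?_, ?_, ?_, ?_⟩ <;>
        · rw [add_zero]; exact hbotU _
    · have hw0 : toLex ((0:H), (0 : ULift.{y} ↥(⊥ : AddSubgroup K)))
          = (0 : H ×ₗ ULift.{y} ↥(⊥ : AddSubgroup K)) := rfl
      rw [← hu0]
      refine ⟨⟨?_, ?_, ?_⟩, fun _ => 0, ⟨?_, ?_, ?_⟩, ?_, ?_⟩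
      · intro z hz
        rw [hw0]
        exact ⟨le_rfl, le_rfl⟩
      · rfl
      · intro z1 h1 z2 h2 h12
        rw [hw0]
        constructor
        · rw [add_zero]
        · rw [add_zero]
      · intro p hp
        exact ⟨le_rfl, le_rfl⟩
      · rfl
      · intro p hp q hq hpq
        constructor
        · rw [add_zero]
        · rw [add_zero]
      · intro z hz
        exact (le_antisymm hz.2 hz.1).symm
      · intro p hp
        rw [hw0] at hp
        exact (le_antisymm hp.2 hp.1).symm
  · -- main case 0 < u
    have hadd00 : ∀ {e e'}, e ∈ E 0 → e' ∈ E 0 → e + e' ∈ E 0 := by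
      intro e e' he he'
      have hvf : v - e' ∈ E (u - 0) := hcompl' h0Iu he'
      rw [sub_zero] at hvf
      have helt : e < v - e' := hlt0 huIu h0u' he hvf
      have hle : e + e' ≤ v := le_of_lt (lt_sub_iff_add_lt.1 helt)
      exact hadd0 h0Iu he he' hle
    have hSrep : ∀ a ∈ AddSubgroup.closure (E 0), ∃ p ∈ E 0, ∃ q ∈ E 0, a = p - q := by
      intro a ha
      refine AddSubgroup.closure_induction ?_ ?_ ?_ ?_ ha
      · exact fun z hz => ⟨z, hz, 0, h0E0, by abel⟩
      · exact ⟨0, h0E0, 0, h0E0, by abel⟩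
      · rintro z w _ _ ⟨p1, hp1, q1, hq1, rfl⟩ ⟨p2, hp2, q2, hq2, rfl⟩
        exact ⟨p1 + p2, hadd00 hp1 hp2, q1 + q2, hadd00 hq1 hq2, by abel⟩
      · rintro z _ ⟨p1, hp1, q1, hq1, rfl⟩
        exact ⟨q1, hq1, p1, hp1, by abel⟩
    have hSpos : ∀ a ∈ AddSubgroup.closure (E 0), (0:K) ≤ a → a ∈ E 0 := by
      intro a ha h0a
      obtain ⟨p, hp, q, hq, rfl⟩ := hSrep a ha
      exact hdiff h0Iu hp hq (sub_nonneg.1 h0a)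
    have hE0S : E 0 ⊆ (AddSubgroup.closure (E 0) : Set K) := AddSubgroup.subset_closure
    have hSd : ∀ {t z}, t ∈ Icc (0:H) u → z ∈ E t → z - c t ∈ AddSubgroup.closure (E 0) := by
      intro t z ht hz
      obtain ⟨w, hw, hwz, hwc⟩ := (hdir t ht).2 z hz (c t) (hcmem t ht)
      have h1 : z - w ∈ E 0 := hdiff ht hz hw hwz
      have h2 : c t - w ∈ E 0 := hdiff ht (hcmem t ht) hw hwc
      have h3 : z - c t = (z - w) - (c t - w) := by abel
      rw [h3]
      exact sub_mem (hE0S h1) (hE0S h2)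
    have haddE : ∀ {t z e}, t ∈ Icc (0:H) u → t < u → z ∈ E t → e ∈ E 0 → z + e ∈ E t := by
      intro t z e ht htu hz he
      have hvz : v - z ∈ E (u - t) := hcompl' ht hz
      have h2 : e < v - z := hlt0 (hIuc ht) (sub_pos.2 htu) he hvz
      have hle : z + e ≤ v := le_of_lt (by have h3 := lt_sub_iff_add_lt.1 h2; rwa [add_comm] at h3)
      exact hadd0 ht hz he hle
    have hsubE : ∀ {t z e}, t ∈ Icc (0:H) u → (0:H) < t → z ∈ E t → e ∈ E 0 → z - e ∈ E t := by
      intro t z e ht h0t hz he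
      have hez : e < z := hlt0 ht h0t he hz
      have heI := hEsub h0Iu he
      have hdI : z - e ∈ Icc (0:K) v :=
        ⟨sub_nonneg.2 (le_of_lt hez), le_trans (sub_le_self _ heI.1) (hEsub ht hz).2⟩
      obtain ⟨s, hs, hsE⟩ := hmemE _ hdI
      have hee : (z - e) + e = z := by abel
      have h2 := hadd s hs 0 h0Iu (z - e) hsE e he (by rw [hee]; exact (hEsub ht hz).2)
      rw [hee, add_zero] at h2
      have hst : s = t := huniq hs ht h2.2 hz
      rwa [hst] at hsE
    have hKC : ∀ {t a}, t ∈ Icc (0:H) u → a ∈ AddSubgroup.closure (E 0) →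
        (t = 0 → (0:K) ≤ a) → (t = u → a ≤ 0) → c t + a ∈ E t := by
      intro t a ht ha hpos hneg
      rcases eq_or_lt_of_le ht.1 with h0t | h0t
      · have h1 : a ∈ E 0 := hSpos a ha (hpos h0t.symm)
        rw [← h0t, hc0, zero_add]
        exact h1
      · rcases eq_or_lt_of_le ht.2 with htu | htu
        · have h1 : -a ∈ E 0 := hSpos _ (neg_mem ha) (neg_nonneg.2 (hneg htu))
          have h2 : v - (-a) ∈ E (u - 0) := hcompl' h0Iu h1
          rw [sub_zero, sub_neg_eq_add] at h2
          rw [htu, hcu]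
          exact h2
        · obtain ⟨p, hp, q, hq, rfl⟩ := hSrep a ha
          have h1 : c t + p ∈ E t := haddE ht htu (hcmem t ht) hp
          have h2 : (c t + p) - q ∈ E t := hsubE ht h0t h1 hq
          have h3 : c t + (p - q) = (c t + p) - q := by abel
          rwa [h3]
    have hsplit : ∀ {a b : K}, (0:K) ≤ a → (0:K) ≤ b → a + b ∈ E 0 → a ∈ E 0 ∧ b ∈ E 0 := by
      intro a b h0a h0b hab
      have habI := hEsub h0Iu hab
      have haI : a ∈ Icc (0:K) v := ⟨h0a, le_trans (le_add_of_nonneg_right h0b) habI.2⟩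
      have hbI : b ∈ Icc (0:K) v := ⟨h0b, le_trans (le_add_of_nonneg_left h0a) habI.2⟩
      obtain ⟨s, hs, hsE⟩ := hmemE _ haI
      obtain ⟨t', ht', htE⟩ := hmemE _ hbI
      have h2 := hadd s hs t' ht' a hsE b htE habI.2
      have hst : s + t' = 0 := huniq ⟨add_nonneg hs.1 ht'.1, h2.1⟩ h0Iu h2.2 hab
      have hs0 : s = 0 := le_antisymm (by
        calc s ≤ s + t' := le_add_of_nonneg_right ht'.1
          _ = 0 := hst) hs.1
      have ht0 : t' = 0 := by rwa [hs0, zero_add] at hst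
      exact ⟨hs0 ▸ hsE, ht0 ▸ htE⟩
    refine ⟨ULift.{y} ↥(AddSubgroup.closure (E 0)), inferInstance, inferInstance, inferInstance, ?_, ?_, ?_⟩
    · -- directed
      intro a b
      obtain ⟨p1, hp1, q1, hq1, he1⟩ := hSrep _ a.down.2
      obtain ⟨p2, hp2, q2, hq2, he2⟩ := hSrep _ b.down.2
      refine ⟨ULift.up ⟨p1 + p2, add_mem (hE0S hp1) (hE0S hp2)⟩, ?_, ?_⟩
      · show (a.down : K) ≤ p1 + p2
        rw [he1]
        calc p1 - q1 ≤ p1 := sub_le_self _ (hEsub h0Iu hq1).1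
          _ ≤ p1 + p2 := le_add_of_nonneg_right (hEsub h0Iu hp2).1
      · show (b.down : K) ≤ p1 + p2
        rw [he2]
        calc p2 - q2 ≤ p2 := sub_le_self _ (hEsub h0Iu hq2).1
          _ ≤ p1 + p2 := le_add_of_nonneg_left (hEsub h0Iu hp1).1
    · -- RDP
      intro a₁ a₂ b₁ b₂ h1 h2 h3 h4 heq
      have hc1 : (0:K) ≤ (a₁.down : K) := h1
      have hc2 : (0:K) ≤ (a₂.down : K) := h2
      have hc3 : (0:K) ≤ (b₁.down : K) := h3
      have hc4 : (0:K) ≤ (b₂.down : K) := h4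
      have heqK : (a₁.down : K) + (a₂.down : K) = (b₁.down : K) + (b₂.down : K) := by
        have h5 : ((a₁ + a₂).down : K) = ((b₁ + b₂).down : K) := by rw [heq]
        exact h5
      obtain ⟨c11, c12, c21, c22, g11, g12, g21, g22, e1, e2, e3, e4⟩ :=
        hK _ _ _ _ hc1 hc2 hc3 hc4 heqK
      have m1 : (a₁.down : K) ∈ E 0 := hSpos _ a₁.down.2 hc1
      have m2 : (a₂.down : K) ∈ E 0 := hSpos _ a₂.down.2 hc2
      have s1 := hsplit g11 g12 (by rw [← e1]; exact m1)
      have s2 := hsplit g21 g22 (by rw [← e2]; exact m2)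
      refine ⟨ULift.up ⟨c11, hE0S s1.1⟩, ULift.up ⟨c12, hE0S s1.2⟩,
        ULift.up ⟨c21, hE0S s2.1⟩, ULift.up ⟨c22, hE0S s2.2⟩, ?_, ?_, ?_, ?_, ?_, ?_, ?_, ?_⟩
      · exact g11
      · exact g12
      · exact g21
      · exact g22
      · exact ULift.ext _ _ (Subtype.ext e1)
      · exact ULift.ext _ _ (Subtype.ext e2)
      · exact ULift.ext _ _ (Subtype.ext e3)
      · exact ULift.ext _ _ (Subtype.ext e4)
    · -- the isomorphism
      set F : K → H ×ₗ (ULift.{y} ↥(AddSubgroup.closure (E 0))) := fun z =>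
        toLex (τ z, ULift.up (if h : z - c (τ z) ∈ AddSubgroup.closure (E 0)
          then (⟨z - c (τ z), h⟩ : ↥(AddSubgroup.closure (E 0))) else 0)) with hFdef
      have hFval : ∀ {z t}, t ∈ Icc (0:H) u → z ∈ E t →
          ∀ (hs : z - c t ∈ AddSubgroup.closure (E 0)),
          F z = toLex (t, ULift.up (⟨z - c t, hs⟩ : ↥(AddSubgroup.closure (E 0)))) := by
        intro z t ht hz hs
        have hτz : τ z = t := hτu ht hz
        show toLex (τ z, ULift.up (if h : z - c (τ z) ∈ AddSubgroup.closure (E 0)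
          then (⟨z - c (τ z), h⟩ : ↥(AddSubgroup.closure (E 0))) else 0)) = _
        rw [hτz]
        rw [dif_pos hs]
      have hFmemIcc : ∀ (t : H) (d : ↥(AddSubgroup.closure (E 0))), t ∈ Icc (0:H) u →
          (t = 0 → (0:K) ≤ (d : K)) → (t = u → (d : K) ≤ 0) →
          toLex (t, ULift.up d) ∈
            Icc (0 : H ×ₗ (ULift.{y} ↥(AddSubgroup.closure (E 0)))) (toLex (u, 0)) := by
        intro t d ht hp hn
        constructor
        · refine (Prod.Lex.toLex_le_toLex (x := ofLex 0) (y := (t, ULift.up d))).2 ?_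
          rcases eq_or_lt_of_le ht.1 with h0 | h0
          · refine Or.inr ⟨h0, ?_⟩
            show ((0 : ↥(AddSubgroup.closure (E 0))) : K) ≤ (d : K)
            simpa using hp h0.symm
          · exact Or.inl h0
        · refine (Prod.Lex.toLex_le_toLex (x := (t, ULift.up d)) (y := (u, 0))).2 ?_
          rcases eq_or_lt_of_le ht.2 with h0 | h0
          · refine Or.inr ⟨h0, ?_⟩
            show (d : K) ≤ ((0 : ↥(AddSubgroup.closure (E 0))) : K)
            simpa using hn h0
          · exact Or.inl h0
      have hIccF : ∀ (t : H) (d : ↥(AddSubgroup.closure (E 0))),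
          toLex (t, ULift.up d) ∈
            Icc (0 : H ×ₗ (ULift.{y} ↥(AddSubgroup.closure (E 0)))) (toLex (u, 0)) →
          t ∈ Icc (0:H) u ∧ (t = 0 → (0:K) ≤ (d:K)) ∧ (t = u → (d:K) ≤ 0) := by
        intro t d hd
        have l1 := (Prod.Lex.toLex_le_toLex (x := ofLex 0) (y := (t, ULift.up d))).1 hd.1
        have l2 := (Prod.Lex.toLex_le_toLex (x := (t, ULift.up d)) (y := (u, 0))).1 hd.2
        refine ⟨⟨?_, ?_⟩, ?_, ?_⟩
        · rcases l1 with h | h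
          · exact le_of_lt h
          · exact le_of_eq h.1
        · rcases l2 with h | h
          · exact le_of_lt h
          · exact le_of_eq h.1
        · intro ht0
          rcases l1 with h | h
          · rw [ht0] at h
            exact absurd h (lt_irrefl _)
          · have h5 : ((0 : ↥(AddSubgroup.closure (E 0))) : K) ≤ (d : K) := h.2
            simpa using h5
        · intro htu
          rcases l2 with h | h
          · rw [htu] at h
            exact absurd h (lt_irrefl _)
          · have h5 : (d : K) ≤ ((0 : ↥(AddSubgroup.closure (E 0))) : K) := h.2
            simpa using h5
      set Ginv : H ×ₗ (ULift.{y} ↥(AddSubgroup.closure (E 0))) → K :=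
        fun p => c (ofLex p).1 + ((ofLex p).2.down : K) with hGdef
      have hginvE : ∀ p, p ∈ Icc (0 : H ×ₗ (ULift.{y} ↥(AddSubgroup.closure (E 0)))) (toLex (u, 0)) →
          Ginv p ∈ E (ofLex p).1 := by
        intro p hp
        obtain ⟨ht, hp0, hpu⟩ := hIccF (ofLex p).1 ((ofLex p).2.down) hp
        exact hKC ht (ofLex p).2.down.2 hp0 hpu
      have hFmem : ∀ z ∈ Icc (0:K) v,
          F z ∈ Icc (0 : H ×ₗ (ULift.{y} ↥(AddSubgroup.closure (E 0)))) (toLex (u, 0)) := by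
        intro z hz
        obtain ⟨ht, hzE⟩ := hτ z hz
        have hs := hSd ht hzE
        rw [hFval ht hzE hs]
        refine hFmemIcc _ _ ht ?_ ?_
        · intro h0
          show (0:K) ≤ z - c (τ z)
          rw [h0, hc0, sub_zero]
          exact hz.1
        · intro hu'
          show z - c (τ z) ≤ 0
          rw [hu', hcu, sub_nonpos]
          exact hz.2
      have hFv : F v = toLex (u, (0 : ULift.{y} ↥(AddSubgroup.closure (E 0)))) := by
        have hs := hSd huIu hvEu
        rw [hFval huIu hvEu hs]
        have h1 : v - c u = 0 := by rw [hcu, sub_self]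
        rw [show (⟨v - c u, hs⟩ : ↥(AddSubgroup.closure (E 0))) = 0 from Subtype.ext h1]
        rfl
      have hFadd : ∀ z1 ∈ Icc (0:K) v, ∀ z2 ∈ Icc (0:K) v, z1 + z2 ≤ v →
          F z1 + F z2 ≤ toLex (u, (0 : ULift.{y} ↥(AddSubgroup.closure (E 0)))) ∧
          F (z1 + z2) = F z1 + F z2 := by
        intro z1 h1 z2 h2 h12
        obtain ⟨ht1, hE1⟩ := hτ z1 h1
        obtain ⟨ht2, hE2⟩ := hτ z2 h2
        have hs1 := hSd ht1 hE1
        have hs2 := hSd ht2 hE2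
        have h3 := hadd _ ht1 _ ht2 _ hE1 _ hE2 h12
        have ht12 : τ z1 + τ z2 ∈ Icc (0:H) u := ⟨add_nonneg ht1.1 ht2.1, h3.1⟩
        have hs12 := hSd ht12 h3.2
        have hd : (⟨z1 + z2 - c (τ z1 + τ z2), hs12⟩ : ↥(AddSubgroup.closure (E 0)))
            = ⟨z1 - c (τ z1), hs1⟩ + ⟨z2 - c (τ z2), hs2⟩ := by
          apply Subtype.ext
          show z1 + z2 - c (τ z1 + τ z2) = (z1 - c (τ z1)) + (z2 - c (τ z2))
          rw [hcadd _ ht1 _ ht2 h3.1]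
          abel
        have heq : F (z1 + z2) = F z1 + F z2 := by
          rw [hFval ht1 hE1 hs1, hFval ht2 hE2 hs2, hFval ht12 h3.2 hs12, hd]
          rfl
        refine ⟨?_, heq⟩
        rw [← heq]
        exact (hFmem _ ⟨add_nonneg h1.1 h2.1, h12⟩).2
      refine ⟨F, ⟨hFmem, hFv, hFadd⟩, Ginv, ⟨?_, ?_, ?_⟩, ?_, ?_⟩
      · intro p hp
        exact hEsub (hIccF (ofLex p).1 ((ofLex p).2.down) hp).1 (hginvE p hp)
      · show c u + ((0 : ↥(AddSubgroup.closure (E 0))) : K) = v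
        rw [ZeroMemClass.coe_zero, add_zero, hcu]
      · intro p hp q hq hpq
        have hpqI : p + q ∈ Icc (0 : H ×ₗ (ULift.{y} ↥(AddSubgroup.closure (E 0)))) (toLex (u, 0)) :=
          ⟨add_nonneg hp.1 hq.1, hpq⟩
        have hle : (ofLex p).1 + (ofLex q).1 ≤ u :=
          (hIccF (ofLex (p + q)).1 ((ofLex (p + q)).2.down) hpqI).1.2
        have heq2 : Ginv (p + q) = Ginv p + Ginv q := by
          show c ((ofLex p).1 + (ofLex q).1) + (((ofLex p).2.down + (ofLex q).2.down :
              ↥(AddSubgroup.closure (E 0))) : K) =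
            (c (ofLex p).1 + ((ofLex p).2.down : K)) + (c (ofLex q).1 + ((ofLex q).2.down : K))
          rw [hcadd _ (hIccF (ofLex p).1 ((ofLex p).2.down) hp).1
            _ (hIccF (ofLex q).1 ((ofLex q).2.down) hq).1 hle, AddSubgroup.coe_add]
          abel
        refine ⟨?_, heq2⟩
        rw [← heq2]
        exact (hEsub (hIccF (ofLex (p + q)).1 ((ofLex (p + q)).2.down) hpqI).1 (hginvE _ hpqI)).2
      · intro z hz
        obtain ⟨ht, hzE⟩ := hτ z hz
        have hs := hSd ht hzE
        rw [hFval ht hzE hs]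
        show c (τ z) + (z - c (τ z)) = z
        abel
      · intro p hp
        have hpE := hginvE p hp
        have ht := (hIccF (ofLex p).1 ((ofLex p).2.down) hp).1
        have hs : Ginv p - c (ofLex p).1 ∈ AddSubgroup.closure (E 0) := by
          show c (ofLex p).1 + ((ofLex p).2.down : K) - c (ofLex p).1 ∈ _
          rw [add_sub_cancel_left]
          exact (ofLex p).2.down.2
        rw [hFval ht hpE hs]
        have hd : (⟨Ginv p - c (ofLex p).1, hs⟩ : ↥(AddSubgroup.closure (E 0)))
            = (ofLex p).2.down := by
          apply Subtype.ext
          show c (ofLex p).1 + ((ofLex p).2.down : K) - c (ofLex p).1 = ((ofLex p).2.down : K)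
          rw [add_sub_cancel_left]
        rw [hd]
        rfl

/-- `E = Γ(K, v)` (with RDP) is strong `(H, u)`-perfect iff there is a
directed Abelian po-group `G` with `E ≅ Γ(H ×ₗ G, (u, 0))`; moreover `G` can be chosen
to satisfy RDP. -/
theorem strongPerfect_iff_lex_representation {K : Type x} {H : Type y}
    [AddCommGroup K] [PartialOrder K] [IsOrderedAddMonoid K] [AddCommGroup H] [PartialOrder H] [IsOrderedAddMonoid H]
    (v : K) (u : H) (hv : IsStrongUnit v) (hK : RDP K)
    (hu : IsStrongUnit u) (hH : RDP H) :
    (IsStrongPerfect v u ↔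
      ∃ (G : Type (max x y)) (_ : AddCommGroup G) (_ : PartialOrder G) (_ : IsOrderedAddMonoid G), IsDirectedGroup G ∧
        ∃ f : K → H ×ₗ G, IsEffectIso v (toLex (u, (0 : G))) f) ∧
    (IsStrongPerfect v u →
      ∃ (G : Type (max x y)) (_ : AddCommGroup G) (_ : PartialOrder G) (_ : IsOrderedAddMonoid G), IsDirectedGroup G ∧ RDP G ∧
        ∃ f : K → H ×ₗ G, IsEffectIso v (toLex (u, (0 : G))) f) := by
  constructor
  · constructor
    · intro h
      obtain ⟨G, iG, iG2, iG3, hdirG, _, f, hf⟩ := forward_aux v u hK hu.1 h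
      exact ⟨G, iG, iG2, iG3, hdirG, f, hf⟩
    · rintro ⟨G, iG, iG2, iG3, hdirG, f, hf⟩
      exact backward_aux v u hv.1 hdirG f hf
  · intro h
    exact forward_aux v u hK hu.1 h
end

section
/- Let E = Γ(H ×ₗ G, (u, 0)), where (H, u) is an Abelian unital po-group with RDP and G is a directed Abelian po-group with RDP. Then E is a subdirect product of a family of antilattice interval effect algebras of the form Γ(H_i ×ₗ G_i, (u_i, 0)): there exist an index set ι, for each i ∈ ι an Abelian unital po-group (H_i, u_i) with RDP and a directed Abelian po-group G_i with RDP such that Γ(H_i ×ₗ G_i, (u_i, 0)) is an antilattice, and a map Φ from E into the product ∏_{i∈ι} Γ(H_i ×ₗ G_i, (u_i, 0)) such that Φ is injective, Φ(a) ≤ Φ(b) (componentwise) if and only if a ≤ b, Φ((u,0)) has all components equal to the respective units (u_i, 0), Φ(x + y) = Φ(x) + Φ(y) componentwise whenever x + y ≤ (u, 0), and for each i ∈ ι the i-th coordinate map of Φ is surjective onto Γ(H_i ×ₗ G_i, (u_i, 0)). -/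
open Set

namespace LexSub

universe up

instance punitOACG : IsOrderedAddMonoid PUnit.{up+1} where
  add_le_add_left := by intros; exact le_refl _

lemma punit_rdp : RDP PUnit.{up+1} := by
  intro a b c d _ _ _ _ _
  exact ⟨0, 0, 0, 0, le_rfl, le_rfl, le_rfl, le_rfl,
    Subsingleton.elim _ _, Subsingleton.elim _ _, Subsingleton.elim _ _, Subsingleton.elim _ _⟩

lemma punit_directed : IsDirectedGroup PUnit.{up+1} :=
  fun a b => ⟨0, le_of_eq (Subsingleton.elim _ _), le_of_eq (Subsingleton.elim _ _)⟩

section PoGroup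
variable {K : Type*} [AddCommGroup K] [PartialOrder K] [IsOrderedAddMonoid K]

lemma rdp_interp (hK : RDP K) {a1 a2 b1 b2 : K} (h11 : a1 ≤ b1) (h12 : a1 ≤ b2)
    (h21 : a2 ≤ b1) (h22 : a2 ≤ b2) :
    ∃ z : K, a1 ≤ z ∧ a2 ≤ z ∧ z ≤ b1 ∧ z ≤ b2 := by
  obtain ⟨c11, c12, c21, c22, p11, p12, p21, p22, e1, e2, e3, e4⟩ :=
    hK (b1 - a1) (b2 - a2) (b1 - a2) (b2 - a1) (sub_nonneg.2 h11) (sub_nonneg.2 h22)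
      (sub_nonneg.2 h21) (sub_nonneg.2 h12) (by abel)
  have hkey : a1 + c12 = c21 + a2 := by
    have h' : a1 - a2 = c21 - c12 := by
      calc a1 - a2 = (b1 - a2) - (b1 - a1) := by abel
        _ = (c11 + c21) - (c11 + c12) := by rw [← e1, ← e3]
        _ = c21 - c12 := by abel
    exact sub_eq_sub_iff_add_eq_add.mp h'
  refine ⟨a1 + c12, le_add_of_nonneg_right p12, ?_, ?_, ?_⟩
  · rw [hkey]; exact le_add_of_nonneg_left p21
  · have hb1 : b1 = c11 + c12 + a1 := sub_eq_iff_eq_add.mp e1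
    rw [hb1, show c11 + c12 + a1 = c11 + (a1 + c12) by abel]
    exact le_add_of_nonneg_left p11
  · have hb2 : b2 = c12 + c22 + a1 := sub_eq_iff_eq_add.mp e4
    rw [hb2, show c12 + c22 + a1 = (a1 + c12) + c22 by abel]
    exact le_add_of_nonneg_right p22

lemma dirUp4 (hK : IsDirectedGroup K) (a b c d : K) :
    ∃ t : K, a ≤ t ∧ b ≤ t ∧ c ≤ t ∧ d ≤ t := by
  obtain ⟨s, hs1, hs2⟩ := hK a b
  obtain ⟨r, hr1, hr2⟩ := hK c d
  obtain ⟨t, ht1, ht2⟩ := hK s r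
  exact ⟨t, hs1.trans ht1, hs2.trans ht1, hr1.trans ht2, hr2.trans ht2⟩

lemma dirDown4 (hK : IsDirectedGroup K) (a b c d : K) :
    ∃ t : K, t ≤ a ∧ t ≤ b ∧ t ≤ c ∧ t ≤ d := by
  obtain ⟨t, h1, h2, h3, h4⟩ := dirUp4 hK (-a) (-b) (-c) (-d)
  exact ⟨-t, neg_le.mp h1, neg_le.mp h2, neg_le.mp h3, neg_le.mp h4⟩

end PoGroup
end LexSub

section LexRDP
namespace LexSub
variable {H : Type*} {G : Type*} [AddCommGroup H] [PartialOrder H] [IsOrderedAddMonoid H]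
    [AddCommGroup G] [PartialOrder G] [IsOrderedAddMonoid G]

lemma lex_le_iff (p q : H × G) :
    toLex p ≤ toLex q ↔ p.1 < q.1 ∨ (p.1 = q.1 ∧ p.2 ≤ q.2) :=
  Prod.Lex.le_iff (x := toLex p) (y := toLex q)

lemma lex_nonneg_iff (p : H × G) :
    0 ≤ toLex p ↔ 0 < p.1 ∨ (0 = p.1 ∧ 0 ≤ p.2) :=
  Prod.Lex.le_iff (x := 0) (y := toLex p)

lemma rdp_lex (hH : RDP H) (hG : IsDirectedGroup G) (hRG : RDP G) : RDP (H ×ₗ G) := by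
  classical
  intro A1 A2 B1 B2 h1 h2 h3 h4 hsum
  obtain ⟨a1, rfl⟩ : ∃ p : H × G, toLex p = A1 := ⟨ofLex A1, rfl⟩
  obtain ⟨a2, rfl⟩ : ∃ p : H × G, toLex p = A2 := ⟨ofLex A2, rfl⟩
  obtain ⟨b1, rfl⟩ : ∃ p : H × G, toLex p = B1 := ⟨ofLex B1, rfl⟩
  obtain ⟨b2, rfl⟩ : ∃ p : H × G, toLex p = B2 := ⟨ofLex B2, rfl⟩
  have hsum' : a1 + a2 = b1 + b2 := toLex.injective hsum
  have hs1 : a1.1 + a2.1 = b1.1 + b2.1 := congrArg Prod.fst hsum'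
  have hs2 : a1.2 + a2.2 = b1.2 + b2.2 := congrArg Prod.snd hsum'
  have n1 : 0 ≤ a1.1 := by
    rcases (lex_nonneg_iff a1).1 h1 with h | h; exacts [le_of_lt h, le_of_eq h.1]
  have n2 : 0 ≤ a2.1 := by
    rcases (lex_nonneg_iff a2).1 h2 with h | h; exacts [le_of_lt h, le_of_eq h.1]
  have n3 : 0 ≤ b1.1 := by
    rcases (lex_nonneg_iff b1).1 h3 with h | h; exacts [le_of_lt h, le_of_eq h.1]
  have n4 : 0 ≤ b2.1 := by
    rcases (lex_nonneg_iff b2).1 h4 with h | h; exacts [le_of_lt h, le_of_eq h.1]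
  obtain ⟨γ11, γ12, γ21, γ22, q11, q12, q21, q22, e1, e2, e3, e4⟩ :=
    hH a1.1 a2.1 b1.1 b2.1 n1 n2 n3 n4 hs1
  obtain ⟨U0, hU1, hU2, hU3, hU4⟩ := dirUp4 hG a1.2 b1.2 0 (b1.2 - a2.2)
  obtain ⟨D, hD1, hD2, hD3, hD4⟩ := dirDown4 hG 0 (b1.2 - a2.2) a1.2 b1.2
  have f1 : γ11 = 0 → γ12 = 0 → 0 ≤ a1.2 := by
    intro i j
    have h0 : a1.1 = 0 := by rw [e1, i, j, add_zero]
    rcases (lex_nonneg_iff a1).1 h1 with h | h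
    · exact absurd h0 (ne_of_gt h)
    · exact h.2
  have f2 : γ11 = 0 → γ21 = 0 → 0 ≤ b1.2 := by
    intro i j
    have h0 : b1.1 = 0 := by rw [e3, i, j, add_zero]
    rcases (lex_nonneg_iff b1).1 h3 with h | h
    · exact absurd h0 (ne_of_gt h)
    · exact h.2
  have f3 : γ22 = 0 → γ12 = 0 → 0 ≤ b2.2 := by
    intro i j
    have h0 : b2.1 = 0 := by rw [e4, i, j, add_zero]
    rcases (lex_nonneg_iff b2).1 h4 with h | h
    · exact absurd h0 (ne_of_gt h)
    · exact h.2
  have f4 : γ22 = 0 → γ21 = 0 → 0 ≤ a2.2 := by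
    intro i j
    have h0 : a2.1 = 0 := by rw [e2, i, j, zero_add]
    rcases (lex_nonneg_iff a2).1 h2 with h | h
    · exact absurd h0 (ne_of_gt h)
    · exact h.2
  have L11 : (if γ11 = 0 then (0 : G) else D) ≤ (if γ12 = 0 then a1.2 else U0) := by
    split_ifs with i j j
    · exact f1 i j
    · exact hU3
    · exact hD3
    · exact hD1.trans hU3
  have L12 : (if γ11 = 0 then (0 : G) else D) ≤ (if γ21 = 0 then b1.2 else U0) := by
    split_ifs with i j j
    · exact f2 i j
    · exact hU3
    · exact hD4
    · exact hD1.trans hU3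
  have L21 : (if γ22 = 0 then b1.2 - a2.2 else D) ≤ (if γ12 = 0 then a1.2 else U0) := by
    split_ifs with i j j
    · have hy2 : 0 ≤ b2.2 := f3 i j
      have : b1.2 - a2.2 + b2.2 = a1.2 := by
        have := hs2; rw [show a1.2 = b1.2 + b2.2 - a2.2 by rw [← hs2]; abel]; abel
      calc b1.2 - a2.2 ≤ b1.2 - a2.2 + b2.2 := le_add_of_nonneg_right hy2
        _ = a1.2 := this
    · exact hU4
    · exact hD3
    · exact hD1.trans hU3
  have L22 : (if γ22 = 0 then b1.2 - a2.2 else D) ≤ (if γ21 = 0 then b1.2 else U0) := by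
    split_ifs with i j j
    · have hx2 : 0 ≤ a2.2 := f4 i j
      exact sub_le_self _ hx2
    · exact hU4
    · exact hD4
    · exact hD1.trans hU3
  obtain ⟨t, ht1, ht2, ht3, ht4⟩ := rdp_interp hRG L11 L12 L21 L22
  refine ⟨toLex (γ11, t), toLex (γ12, a1.2 - t), toLex (γ21, b1.2 - t),
    toLex (γ22, a2.2 - b1.2 + t), ?_, ?_, ?_, ?_, ?_, ?_, ?_, ?_⟩
  · rw [lex_nonneg_iff]
    by_cases i : γ11 = 0
    · exact Or.inr ⟨i.symm, by simpa [i] using ht1⟩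
    · exact Or.inl (lt_of_le_of_ne q11 (Ne.symm i))
  · rw [lex_nonneg_iff]
    by_cases i : γ12 = 0
    · refine Or.inr ⟨i.symm, sub_nonneg.2 ?_⟩
      simpa [i] using ht3
    · exact Or.inl (lt_of_le_of_ne q12 (Ne.symm i))
  · rw [lex_nonneg_iff]
    by_cases i : γ21 = 0
    · refine Or.inr ⟨i.symm, sub_nonneg.2 ?_⟩
      simpa [i] using ht4
    · exact Or.inl (lt_of_le_of_ne q21 (Ne.symm i))
  · rw [lex_nonneg_iff]
    by_cases i : γ22 = 0
    · refine Or.inr ⟨i.symm, ?_⟩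
      have h' : b1.2 - a2.2 ≤ t := by simpa [i] using ht2
      have : 0 ≤ t - (b1.2 - a2.2) := sub_nonneg.2 h'
      calc (0:G) ≤ t - (b1.2 - a2.2) := this
        _ = a2.2 - b1.2 + t := by abel
    · exact Or.inl (lt_of_le_of_ne q22 (Ne.symm i))
  · have hc : a1.2 = t + (a1.2 - t) := by abel
    exact congrArg toLex
      (show a1 = (γ11 + γ12, t + (a1.2 - t)) from Prod.ext e1 hc)
  · have hc : a2.2 = (b1.2 - t) + (a2.2 - b1.2 + t) := by abel
    exact congrArg toLex
      (show a2 = (γ21 + γ22, (b1.2 - t) + (a2.2 - b1.2 + t)) from Prod.ext e2 hc)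
  · have hc : b1.2 = t + (b1.2 - t) := by abel
    exact congrArg toLex
      (show b1 = (γ11 + γ21, t + (b1.2 - t)) from Prod.ext e3 hc)
  · have hb22 : b2.2 = a1.2 + a2.2 - b1.2 := by rw [hs2]; abel
    have hc : b2.2 = (a1.2 - t) + (a2.2 - b1.2 + t) := by rw [hb22]; abel
    exact congrArg toLex
      (show b2 = (γ12 + γ22, (a1.2 - t) + (a2.2 - b1.2 + t)) from Prod.ext e4 hc)

end LexSub
end LexRDP

namespace LexSub
section Quot
variable {K : Type*} [AddCommGroup K] [PartialOrder K] [IsOrderedAddMonoid K]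

def OId (S : Set K) : Prop :=
  0 ∈ S ∧ (∀ a ∈ S, -a ∈ S) ∧ (∀ a ∈ S, ∀ b ∈ S, a + b ∈ S) ∧
    (∀ a ∈ S, ∀ b ∈ S, ∀ x : K, a ≤ x → x ≤ b → x ∈ S) ∧
    (∀ a ∈ S, ∀ b ∈ S, ∃ c ∈ S, a ≤ c ∧ b ≤ c)

lemma oid_zero : OId ({0} : Set K) := by
  refine ⟨rfl, ?_, ?_, ?_, ?_⟩
  · intro a ha; rw [Set.mem_singleton_iff] at *; simp [ha]
  · intro a ha b hb; rw [Set.mem_singleton_iff] at *; simp [ha, hb]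
  · intro a ha b hb x hx1 hx2
    rw [Set.mem_singleton_iff] at *
    subst ha; subst hb; exact le_antisymm hx2 hx1
  · intro a ha b hb
    rw [Set.mem_singleton_iff] at *
    exact ⟨0, rfl, le_of_eq ha, le_of_eq hb⟩

lemma oid_sub {S : Set K} (hS : OId S) {a b : K} (ha : a ∈ S) (hb : b ∈ S) :
    a - b ∈ S := by
  have := hS.2.2.1 a ha (-b) (hS.2.1 b hb)
  simpa [sub_eq_add_neg] using this

lemma exists_maximal_avoider {w : K} (hw : ¬ w ≤ 0) :
    ∃ S : Set K, OId S ∧ (∀ m ∈ S, ¬ w ≤ m) ∧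
      ∀ T : Set K, OId T → (∀ m ∈ T, ¬ w ≤ m) → S ⊆ T → T ⊆ S := by
  obtain ⟨M, _, hmax⟩ :=
    zorn_subset_nonempty {S : Set K | OId S ∧ ∀ m ∈ S, ¬ w ≤ m}
      (fun c hc hchain hne => by
        obtain ⟨s0, hs0⟩ := hne
        refine ⟨⋃₀ c, ⟨⟨?_, ?_, ?_, ?_, ?_⟩, ?_⟩, fun s hs => Set.subset_sUnion_of_mem hs⟩
        · exact ⟨s0, hs0, (hc hs0).1.1⟩
        · rintro a ⟨s, hs, has⟩
          exact ⟨s, hs, (hc hs).1.2.1 a has⟩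
        · rintro a ⟨s, hs, has⟩ b ⟨t, ht, hbt⟩
          rcases hchain.total hs ht with h | h
          · exact ⟨t, ht, (hc ht).1.2.2.1 a (h has) b hbt⟩
          · exact ⟨s, hs, (hc hs).1.2.2.1 a has b (h hbt)⟩
        · rintro a ⟨s, hs, has⟩ b ⟨t, ht, hbt⟩ x hx1 hx2
          rcases hchain.total hs ht with h | h
          · exact ⟨t, ht, (hc ht).1.2.2.2.1 a (h has) b hbt x hx1 hx2⟩
          · exact ⟨s, hs, (hc hs).1.2.2.2.1 a has b (h hbt) x hx1 hx2⟩
        · rintro a ⟨s, hs, has⟩ b ⟨t, ht, hbt⟩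
          rcases hchain.total hs ht with h | h
          · obtain ⟨d, hd, h1, h2⟩ := (hc ht).1.2.2.2.2 a (h has) b hbt
            exact ⟨d, ⟨t, ht, hd⟩, h1, h2⟩
          · obtain ⟨d, hd, h1, h2⟩ := (hc hs).1.2.2.2.2 a has b (h hbt)
            exact ⟨d, ⟨s, hs, hd⟩, h1, h2⟩
        · rintro m ⟨s, hs, hms⟩
          exact (hc hs).2 m hms)
      {0} ⟨oid_zero, by intro m hm; rw [Set.mem_singleton_iff] at hm; subst hm; exact hw⟩
  exact ⟨M, hmax.prop.1, hmax.prop.2, fun T hT1 hT2 hsub => hmax.2 ⟨hT1, hT2⟩ hsub⟩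

def subgrp (S : Set K) (hS : OId S) : AddSubgroup K where
  carrier := S
  zero_mem' := hS.1
  add_mem' := fun {a b} ha hb => hS.2.2.1 a ha b hb
  neg_mem' := fun {a} ha => hS.2.1 a ha

variable (S : Set K) (hS : OId S)

instance qOrder : PartialOrder (K ⧸ subgrp S hS) where
  le x y := ∃ a b : K,
    QuotientAddGroup.mk a = x ∧ (QuotientAddGroup.mk b : K ⧸ subgrp S hS) = y ∧ a ≤ b
  le_refl x := by
    obtain ⟨a, rfl⟩ := QuotientAddGroup.mk_surjective x
    exact ⟨a, a, rfl, rfl, le_rfl⟩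
  le_trans x y z := by
    rintro ⟨a, b, rfl, rfl, hab⟩ ⟨b', c, hb', rfl, hbc⟩
    have hm : b' - b ∈ S := (QuotientAddGroup.eq_iff_sub_mem).1 hb'
    refine ⟨a + (b' - b), c, ?_, rfl, ?_⟩
    · exact (QuotientAddGroup.eq_iff_sub_mem).2 (by simpa using (show b' - b ∈ subgrp S hS from hm))
    · calc a + (b' - b) ≤ b + (b' - b) := add_le_add_left hab _
        _ = b' := by abel
        _ ≤ c := hbc
  le_antisymm x y := by
    rintro ⟨a, b, rfl, rfl, hab⟩ ⟨b', a', hb', ha', h2⟩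
    have hsa : a' - a ∈ S := (QuotientAddGroup.eq_iff_sub_mem).1 ha'
    have hsb : b' - b ∈ S := (QuotientAddGroup.eq_iff_sub_mem).1 hb'
    have h3 : 0 ≤ a' - b' := sub_nonneg.2 h2
    have h4 : a' - b' ≤ (a' - a) - (b' - b) := by
      have hab' : a - b ≤ 0 := sub_nonpos.2 hab
      calc a' - b' = (a' - a) - (b' - b) + (a - b) := by abel
        _ ≤ (a' - a) - (b' - b) + 0 := add_le_add_right hab' _
        _ = (a' - a) - (b' - b) := add_zero _
    have hmem : a' - b' ∈ S :=
      hS.2.2.2.1 0 hS.1 ((a' - a) - (b' - b)) (oid_sub hS hsa hsb) (a' - b') h3 h4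
    have hfin : a - b ∈ S := by
      have h5 := oid_sub hS hmem hsa
      have h6 := hS.2.2.1 _ h5 _ hsb
      have e : a - b = (a' - b') - (a' - a) + (b' - b) := by abel
      rw [e]; exact h6
    exact (QuotientAddGroup.eq_iff_sub_mem).2 hfin

instance qOrderMono : IsOrderedAddMonoid (K ⧸ subgrp S hS) where
  add_le_add_left x y := by
    rintro ⟨a, b, rfl, rfl, hab⟩ c
    obtain ⟨z, rfl⟩ := QuotientAddGroup.mk_surjective c
    exact ⟨a + z, b + z, (QuotientAddGroup.mk_add _ _ _).symm,
      (QuotientAddGroup.mk_add _ _ _).symm, add_le_add_left hab z⟩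

lemma qle_mk {a b : K} (h : a ≤ b) :
    (QuotientAddGroup.mk a : K ⧸ subgrp S hS) ≤ QuotientAddGroup.mk b :=
  ⟨a, b, rfl, rfl, h⟩

lemma qle_dest {a b : K}
    (h : (QuotientAddGroup.mk a : K ⧸ subgrp S hS) ≤ QuotientAddGroup.mk b) :
    ∃ m ∈ S, a ≤ b + m := by
  obtain ⟨a', b', ha, hb, hab⟩ := h
  have hsa : a' - a ∈ S := (QuotientAddGroup.eq_iff_sub_mem).1 ha
  have hsb : b' - b ∈ S := (QuotientAddGroup.eq_iff_sub_mem).1 hb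
  refine ⟨(b' - b) - (a' - a), oid_sub hS hsb hsa, ?_⟩
  calc a = a' - (a' - a) := by abel
    _ ≤ b' - (a' - a) := sub_le_sub_right hab _
    _ = b + ((b' - b) - (a' - a)) := by abel

lemma qpos_rep {x : K ⧸ subgrp S hS} (hx : 0 ≤ x) :
    ∃ a : K, 0 ≤ a ∧ QuotientAddGroup.mk a = x := by
  obtain ⟨z, rfl⟩ := QuotientAddGroup.mk_surjective x
  have h : (QuotientAddGroup.mk (0 : K) : K ⧸ subgrp S hS) ≤ QuotientAddGroup.mk z := by
    rw [QuotientAddGroup.mk_zero]; exact hx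
  obtain ⟨m, hm, hzm⟩ := qle_dest S hS h
  refine ⟨z + m, by simpa using hzm, ?_⟩
  exact (QuotientAddGroup.eq_iff_sub_mem).2 (by simpa using (show m ∈ subgrp S hS from hm))

end Quot
end LexSub

namespace LexSub
section Quot2
variable {K : Type*} [AddCommGroup K] [PartialOrder K] [IsOrderedAddMonoid K] (S : Set K) (hS : OId S)

lemma qmk_nsmul (n : ℕ) (a : K) :
    (QuotientAddGroup.mk (n • a) : K ⧸ subgrp S hS) = n • QuotientAddGroup.mk a :=
  map_nsmul (QuotientAddGroup.mk' (subgrp S hS)) n a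

lemma qRDP (hK : RDP K) : RDP (K ⧸ subgrp S hS) := by
  intro p1 p2 q1 q2 h1 h2 h3 h4 hsum
  obtain ⟨a1, ha1, rfl⟩ := qpos_rep S hS h1
  obtain ⟨a2, ha2, rfl⟩ := qpos_rep S hS h2
  obtain ⟨b1, hb1, rfl⟩ := qpos_rep S hS h3
  obtain ⟨b2, hb2, rfl⟩ := qpos_rep S hS h4
  have hsum' : (QuotientAddGroup.mk (a1 + a2) : K ⧸ subgrp S hS)
      = QuotientAddGroup.mk (b1 + b2) := by
    rw [QuotientAddGroup.mk_add, QuotientAddGroup.mk_add]; exact hsum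
  have hmem : (a1 + a2) - (b1 + b2) ∈ S := (QuotientAddGroup.eq_iff_sub_mem).1 hsum'
  set m : K := b1 + b2 - (a1 + a2) with hm_def
  have hmS : m ∈ S := by
    have := hS.2.1 _ hmem
    simpa [hm_def, neg_sub] using this
  obtain ⟨m'', hm''S, hge1, hge2⟩ := hS.2.2.2.2 (-m) (hS.2.1 m hmS) 0 hS.1
  have hmm'' : 0 ≤ m + m'' := by
    have h := add_le_add_right hge1 m
    simpa using h
  have key : (a1 + (m + m'')) + a2 = (b1 + m'') + b2 := by
    rw [hm_def]; abel
  have pos1 : 0 ≤ a1 + (m + m'') := add_nonneg ha1 hmm''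
  have pos2 : 0 ≤ b1 + m'' := add_nonneg hb1 hge2
  obtain ⟨c11, c12, c21, c22, p11, p12, p21, p22, e1, e2, e3, e4⟩ :=
    hK (a1 + (m + m'')) a2 (b1 + m'') b2 pos1 ha2 pos2 hb2 key
  have hmm''S : m + m'' ∈ S := hS.2.2.1 m hmS m'' hm''S
  refine ⟨QuotientAddGroup.mk c11, QuotientAddGroup.mk c12, QuotientAddGroup.mk c21,
    QuotientAddGroup.mk c22, ?_, ?_, ?_, ?_, ?_, ?_, ?_, ?_⟩
  · rw [← QuotientAddGroup.mk_zero (subgrp S hS)]; exact qle_mk S hS p11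
  · rw [← QuotientAddGroup.mk_zero (subgrp S hS)]; exact qle_mk S hS p12
  · rw [← QuotientAddGroup.mk_zero (subgrp S hS)]; exact qle_mk S hS p21
  · rw [← QuotientAddGroup.mk_zero (subgrp S hS)]; exact qle_mk S hS p22
  · have : (QuotientAddGroup.mk a1 : K ⧸ subgrp S hS)
        = QuotientAddGroup.mk (a1 + (m + m'')) := by
      refine ((QuotientAddGroup.eq_iff_sub_mem).2 ?_).symm
      simpa using (show m + m'' ∈ subgrp S hS from hmm''S)
    rw [this, e1, QuotientAddGroup.mk_add]
  · rw [e2, QuotientAddGroup.mk_add]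
  · have : (QuotientAddGroup.mk b1 : K ⧸ subgrp S hS)
        = QuotientAddGroup.mk (b1 + m'') := by
      refine ((QuotientAddGroup.eq_iff_sub_mem).2 ?_).symm
      simpa using (show m'' ∈ subgrp S hS from hm''S)
    rw [this, e3, QuotientAddGroup.mk_add]
  · rw [e4, QuotientAddGroup.mk_add]

lemma qSU {v : K} (hv : IsStrongUnit v) :
    IsStrongUnit (QuotientAddGroup.mk v : K ⧸ subgrp S hS) := by
  constructor
  · rw [← QuotientAddGroup.mk_zero (subgrp S hS)]; exact qle_mk S hS hv.1
  · intro g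
    obtain ⟨a, rfl⟩ := QuotientAddGroup.mk_surjective g
    obtain ⟨n, hn⟩ := hv.2 a
    exact ⟨n, le_of_le_of_eq (qle_mk S hS hn) (qmk_nsmul S hS n v)⟩

end Quot2

section Disj
variable {Q : Type*} [AddCommGroup Q] [PartialOrder Q] [IsOrderedAddMonoid Q]

lemma disj_nsmul {p q : Q} (hq : 0 ≤ q) (hd : ∀ z : Q, z ≤ p → z ≤ q → z ≤ 0) :
    ∀ n : ℕ, ∀ z : Q, z ≤ p → z ≤ n • q → z ≤ 0 := by
  intro n
  induction n with
  | zero => intro z _ hz; simpa using hz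
  | succ n ih =>
    intro z hzp hzq
    have h1 : z - q ≤ p := (sub_le_self z hq).trans hzp
    have h2 : z - q ≤ n • q := by
      rw [sub_le_iff_le_add]
      calc z ≤ (n + 1) • q := hzq
        _ = n • q + q := succ_nsmul q n
    have h3 : z - q ≤ 0 := ih (z - q) h1 h2
    exact hd z hzp (by simpa [sub_nonpos] using h3)

lemma disj_nsmul2 {p q : Q} (hp : 0 ≤ p) (hq : 0 ≤ q)
    (hd : ∀ z : Q, z ≤ p → z ≤ q → z ≤ 0) (n : ℕ) :
    ∀ z : Q, z ≤ n • p → z ≤ n • q → z ≤ 0 := by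
  have d1 : ∀ z : Q, z ≤ p → z ≤ n • q → z ≤ 0 := disj_nsmul hq hd n
  have d2 : ∀ z : Q, z ≤ n • q → z ≤ p → z ≤ 0 := fun z h1 h2 => d1 z h2 h1
  have d3 : ∀ z : Q, z ≤ n • q → z ≤ n • p → z ≤ 0 := disj_nsmul hp d2 n
  exact fun z h1 h2 => d3 z h2 h1

end Disj

section Fuchs
variable {K : Type*} [AddCommGroup K] [PartialOrder K] [IsOrderedAddMonoid K] (S : Set K) {w : K}

lemma exists_bound (hS : OId S) (hmax : ∀ T : Set K, OId T → (∀ m ∈ T, ¬ w ≤ m) → S ⊆ T → T ⊆ S)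
    {c : K} (hc0 : 0 ≤ c) (hcS : c ∉ S) : ∃ m ∈ S, ∃ n : ℕ, w ≤ m + n • c := by
  set J : Set K := {x | ∃ m ∈ S, ∃ n : ℕ, -(m + n • c) ≤ x ∧ x ≤ m + n • c} with hJ_def
  have hSJ : S ⊆ J := by
    intro x hx
    obtain ⟨m'', hm'', h1, h2⟩ := hS.2.2.2.2 x hx (-x) (hS.2.1 x hx)
    refine ⟨m'', hm'', 0, ?_, ?_⟩
    · simpa using neg_le.1 (by simpa using h2)
    · simpa using h1
  have hcJ : c ∈ J := by
    refine ⟨0, hS.1, 1, ?_, ?_⟩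
    · have : -c ≤ c := (neg_nonpos.2 hc0).trans hc0
      simpa using this
    · simp
  have hJ : OId J := by
    refine ⟨hSJ hS.1, ?_, ?_, ?_, ?_⟩
    · rintro a ⟨m, hm, n, hlo, hhi⟩
      exact ⟨m, hm, n, by simpa using neg_le_neg hhi, by simpa using neg_le_neg hlo⟩
    · rintro a ⟨m1, hm1, n1, hlo1, hhi1⟩ b ⟨m2, hm2, n2, hlo2, hhi2⟩
      refine ⟨m1 + m2, hS.2.2.1 _ hm1 _ hm2, n1 + n2, ?_, ?_⟩
      · have := add_le_add hlo1 hlo2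
        calc -(m1 + m2 + (n1 + n2) • c) = -(m1 + n1 • c) + -(m2 + n2 • c) := by
              rw [add_nsmul]; abel
          _ ≤ a + b := this
      · calc a + b ≤ (m1 + n1 • c) + (m2 + n2 • c) := add_le_add hhi1 hhi2
          _ = m1 + m2 + (n1 + n2) • c := by rw [add_nsmul]; abel
    · rintro a ⟨m1, hm1, n1, hlo1, _⟩ b ⟨m2, hm2, n2, _, hhi2⟩ x hx1 hx2
      obtain ⟨m, hmS, hge1, hge2⟩ := hS.2.2.2.2 m1 hm1 m2 hm2
      refine ⟨m, hmS, n1 + n2, ?_, ?_⟩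
      · have h' : -(m + (n1 + n2) • c) ≤ -(m1 + n1 • c) := by
          apply neg_le_neg
          exact add_le_add hge1 (nsmul_le_nsmul_left hc0 (Nat.le_add_right _ _))
        exact (h'.trans hlo1).trans hx1
      · refine hx2.trans (hhi2.trans ?_)
        exact add_le_add hge2 (nsmul_le_nsmul_left hc0 (Nat.le_add_left _ _))
    · rintro a ⟨m1, hm1, n1, _, hhi1⟩ b ⟨m2, hm2, n2, _, hhi2⟩
      obtain ⟨m, hmS, hge1, hge2⟩ := hS.2.2.2.2 m1 hm1 m2 hm2
      obtain ⟨m', hm'S, hge1', hge2'⟩ := hS.2.2.2.2 m hmS (-m) (hS.2.1 m hmS)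
      refine ⟨m' + (n1 + n2) • c, ⟨m', hm'S, n1 + n2, ?_, le_rfl⟩, ?_, ?_⟩
      · have h0 : (0:K) ≤ (n1 + n2) • c := nsmul_nonneg hc0 _
        have : -m' ≤ m' := (neg_le.1 (by simpa using hge2')).trans hge1'
        calc -(m' + (n1 + n2) • c) = -m' + -((n1+n2) • c) := by abel
          _ ≤ m' + (n1 + n2) • c := add_le_add this ((neg_nonpos.2 h0).trans h0)
      · refine hhi1.trans (add_le_add (hge1.trans hge1') ?_)
        exact nsmul_le_nsmul_left hc0 (Nat.le_add_right _ _)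
      · refine hhi2.trans (add_le_add (hge2.trans hge1') ?_)
        exact nsmul_le_nsmul_left hc0 (Nat.le_add_left _ _)
  by_cases hAvJ : ∀ m ∈ J, ¬ w ≤ m
  · exact absurd (hmax J hJ hAvJ hSJ hcJ) hcS
  · push_neg at hAvJ
    obtain ⟨j, ⟨m, hm, n, _, hhi⟩, hwj⟩ := hAvJ
    exact ⟨m, hm, n, hwj.trans hhi⟩

lemma fuchs_disj (hS : OId S) (hAv : ∀ m ∈ S, ¬ w ≤ m)
    (hmax : ∀ T : Set K, OId T → (∀ m ∈ T, ¬ w ≤ m) → S ⊆ T → T ⊆ S)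
    {p q : K ⧸ subgrp S hS} (hp : 0 ≤ p) (hq : 0 ≤ q)
    (hd : ∀ z : K ⧸ subgrp S hS, z ≤ p → z ≤ q → z ≤ 0) : p = 0 ∨ q = 0 := by
  by_contra hc
  push_neg at hc
  obtain ⟨a, ha0, hamk⟩ := qpos_rep S hS hp
  obtain ⟨b, hb0, hbmk⟩ := qpos_rep S hS hq
  have haS : a ∉ S := fun h => hc.1 (by rw [← hamk]; exact (QuotientAddGroup.eq_zero_iff a).2 h)
  have hbS : b ∉ S := fun h => hc.2 (by rw [← hbmk]; exact (QuotientAddGroup.eq_zero_iff b).2 h)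
  obtain ⟨m1, hm1, n1, hw1⟩ := exists_bound S hS hmax ha0 haS
  obtain ⟨m2, hm2, n2, hw2⟩ := exists_bound S hS hmax hb0 hbS
  obtain ⟨m, hmS, hge1, hge2⟩ := hS.2.2.2.2 m1 hm1 m2 hm2
  set n : ℕ := n1 + n2 with hn_def
  have hwa : w - m ≤ n • a := by
    rw [sub_le_iff_le_add]
    refine hw1.trans ?_
    rw [add_comm (n • a) m]
    exact add_le_add hge1 (nsmul_le_nsmul_left ha0 (Nat.le_add_right _ _))
  have hwb : w - m ≤ n • b := by
    rw [sub_le_iff_le_add]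
    refine hw2.trans ?_
    rw [add_comm (n • b) m]
    exact add_le_add hge2 (nsmul_le_nsmul_left hb0 (Nat.le_add_left _ _))
  have hmkw : (QuotientAddGroup.mk (w - m) : K ⧸ subgrp S hS) = QuotientAddGroup.mk w := by
    refine (QuotientAddGroup.eq_iff_sub_mem).2 ?_
    have he : w - m - w = -m := by abel
    rw [he]
    exact hS.2.1 m hmS
  have hq1 : (QuotientAddGroup.mk w : K ⧸ subgrp S hS) ≤ n • p := by
    rw [← hmkw, ← hamk, ← qmk_nsmul S hS n a]; exact qle_mk S hS hwa
  have hq2 : (QuotientAddGroup.mk w : K ⧸ subgrp S hS) ≤ n • q := by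
    rw [← hmkw, ← hbmk, ← qmk_nsmul S hS n b]; exact qle_mk S hS hwb
  have hw0 : (QuotientAddGroup.mk w : K ⧸ subgrp S hS) ≤ 0 :=
    disj_nsmul2 hp hq hd n _ hq1 hq2
  rw [← QuotientAddGroup.mk_zero (subgrp S hS)] at hw0
  obtain ⟨m', hm', hwm'⟩ := qle_dest S hS hw0
  exact hAv m' hm' (by simpa using hwm')

lemma interval_lift (hS : OId S) (hK : RDP K) {v : K} (hv0 : 0 ≤ v)
    {x : K ⧸ subgrp S hS} (h0 : 0 ≤ x) (h1 : x ≤ QuotientAddGroup.mk v) :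
    ∃ a : K, 0 ≤ a ∧ a ≤ v ∧ QuotientAddGroup.mk a = x := by
  obtain ⟨y, hy0, rfl⟩ := qpos_rep S hS h0
  obtain ⟨m0, hm0, hym⟩ := qle_dest S hS h1
  obtain ⟨m', hm'S, hge1, hge2⟩ := hS.2.2.2.2 m0 hm0 0 hS.1
  have hym' : y ≤ v + m' := hym.trans (add_le_add_right hge1 v)
  have pos2 : 0 ≤ v + m' - y := sub_nonneg.2 hym'
  have key : y + (v + m' - y) = v + m' := by abel
  obtain ⟨c11, c12, c21, c22, p11, p12, p21, p22, e1, e2, e3, e4⟩ :=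
    hK y (v + m' - y) v m' hy0 pos2 hv0 hge2 key
  have hc12le : c12 ≤ m' := by rw [e4]; exact le_add_of_nonneg_right p22
  have hc12S : c12 ∈ S := hS.2.2.2.1 0 hS.1 m' hm'S c12 p12 hc12le
  refine ⟨c11, p11, ?_, ?_⟩
  · rw [e3]; exact le_add_of_nonneg_right p21
  · refine (QuotientAddGroup.eq_iff_sub_mem).2 ?_
    have he : c11 - y = -c12 := by rw [e1]; abel
    rw [he]
    exact hS.2.1 c12 hc12S

end Fuchs
end LexSub

namespace LexSub
section Anti
universe up
variable {Q : Type*} [AddCommGroup Q] [PartialOrder Q] [IsOrderedAddMonoid Q]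

lemma lexP_le_iff (r s : Q ×ₗ PUnit.{up+1}) : r ≤ s ↔ (ofLex r).1 ≤ (ofLex s).1 := by
  constructor
  · intro h
    rcases (Prod.Lex.le_iff (x := r) (y := s)).1 h with h' | h'
    · exact le_of_lt h'
    · exact le_of_eq h'.1
  · intro h
    rcases lt_or_eq_of_le h with h' | h'
    · exact (Prod.Lex.le_iff (x := r) (y := s)).2 (Or.inl h')
    · exact (Prod.Lex.le_iff (x := r) (y := s)).2
        (Or.inr ⟨h', le_of_eq (Subsingleton.elim _ _)⟩)

lemma lex_punit_antilattice (hR : RDP Q)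
    (hDZ : ∀ p q : Q, 0 ≤ p → 0 ≤ q → (∀ z : Q, z ≤ p → z ≤ q → z ≤ 0) → p = 0 ∨ q = 0)
    (v : Q) : IsAntilattice ↥(Set.Icc (0 : Q ×ₗ PUnit.{up+1}) (toLex (v, 0))) := by
  intro A B hex
  obtain ⟨ha0, hav⟩ : 0 ≤ (ofLex A.1).1 ∧ (ofLex A.1).1 ≤ v :=
    ⟨(lexP_le_iff _ _).1 A.2.1, (lexP_le_iff _ _).1 A.2.2⟩
  obtain ⟨hb0, hbv⟩ : 0 ≤ (ofLex B.1).1 ∧ (ofLex B.1).1 ≤ v :=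
    ⟨(lexP_le_iff _ _).1 B.2.1, (lexP_le_iff _ _).1 B.2.2⟩
  set a := (ofLex A.1).1
  set b := (ofLex B.1).1
  rcases hex with ⟨C, hC⟩ | ⟨C, hC⟩
  · -- supremum case
    have hAC : A ≤ C := hC.1 (Set.mem_insert _ _)
    have hBC : B ≤ C := hC.1 (Set.mem_insert_of_mem _ rfl)
    set c := (ofLex C.1).1 with hc_def
    have hac : a ≤ c := (lexP_le_iff _ _).1 (Subtype.coe_le_coe.2 hAC)
    have hbc : b ≤ c := (lexP_le_iff _ _).1 (Subtype.coe_le_coe.2 hBC)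
    have hd : ∀ z : Q, z ≤ c - a → z ≤ c - b → z ≤ 0 := by
      intro z h1 h2
      have h2a : a ≤ c - z := le_sub_comm.1 h1
      have h2b : b ≤ c - z := le_sub_comm.1 h2
      obtain ⟨t, h3, h4, h5, h6⟩ := rdp_interp hR h2a hav h2b hbv
      have ht0 : 0 ≤ t := ha0.trans h3
      have hDmem : toLex (t, (0 : PUnit.{up+1})) ∈ Set.Icc (0 : Q ×ₗ PUnit.{up+1}) (toLex (v, 0)) :=
        ⟨(lexP_le_iff _ _).2 ht0, (lexP_le_iff _ _).2 h6⟩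
      have hD : (⟨toLex (t, 0), hDmem⟩ : ↥(Set.Icc (0 : Q ×ₗ PUnit.{up+1}) (toLex (v, 0))))
          ∈ upperBounds {A, B} := by
        rintro X hX
        rcases hX with rfl | hX
        · exact Subtype.coe_le_coe.1 ((lexP_le_iff _ _).2 h3)
        · rw [Set.mem_singleton_iff] at hX; subst hX
          exact Subtype.coe_le_coe.1 ((lexP_le_iff _ _).2 h4)
      have hCD := hC.2 hD
      have hct : c ≤ t := (lexP_le_iff _ _).1 (Subtype.coe_le_coe.2 hCD)
      have : c ≤ c - z := hct.trans h5
      have := le_sub_comm.1 this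
      simpa using this
    rcases hDZ (c - a) (c - b) (sub_nonneg.2 hac) (sub_nonneg.2 hbc) hd with h | h
    · right
      exact Subtype.coe_le_coe.1 ((lexP_le_iff _ _).2 (hbc.trans_eq (sub_eq_zero.1 h)))
    · left
      exact Subtype.coe_le_coe.1 ((lexP_le_iff _ _).2 (hac.trans_eq (sub_eq_zero.1 h)))
  · -- infimum case
    have hCA : C ≤ A := hC.1 (Set.mem_insert _ _)
    have hCB : C ≤ B := hC.1 (Set.mem_insert_of_mem _ rfl)
    set c := (ofLex C.1).1 with hc_def
    have hca : c ≤ a := (lexP_le_iff _ _).1 (Subtype.coe_le_coe.2 hCA)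
    have hcb : c ≤ b := (lexP_le_iff _ _).1 (Subtype.coe_le_coe.2 hCB)
    have hc0 : 0 ≤ c := (lexP_le_iff _ _).1 C.2.1
    have hd : ∀ z : Q, z ≤ a - c → z ≤ b - c → z ≤ 0 := by
      intro z h1 h2
      have h2a : z + c ≤ a := le_sub_iff_add_le.1 h1
      have h2b : z + c ≤ b := le_sub_iff_add_le.1 h2
      obtain ⟨t, h3, h4, h5, h6⟩ := rdp_interp hR ha0 hb0 h2a h2b
      have hDmem : toLex (t, (0 : PUnit.{up+1})) ∈ Set.Icc (0 : Q ×ₗ PUnit.{up+1}) (toLex (v, 0)) :=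
        ⟨(lexP_le_iff _ _).2 h3, (lexP_le_iff _ _).2 (h5.trans hav)⟩
      have hD : (⟨toLex (t, 0), hDmem⟩ : ↥(Set.Icc (0 : Q ×ₗ PUnit.{up+1}) (toLex (v, 0))))
          ∈ lowerBounds {A, B} := by
        rintro X hX
        rcases hX with rfl | hX
        · exact Subtype.coe_le_coe.1 ((lexP_le_iff _ _).2 h5)
        · rw [Set.mem_singleton_iff] at hX; subst hX
          exact Subtype.coe_le_coe.1 ((lexP_le_iff _ _).2 h6)
      have hDC := hC.2 hD
      have htc : t ≤ c := (lexP_le_iff _ _).1 (Subtype.coe_le_coe.2 hDC)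
      have : z + c ≤ c := h4.trans htc
      exact (add_le_iff_nonpos_left).1 this
    rcases hDZ (a - c) (b - c) (sub_nonneg.2 hca) (sub_nonneg.2 hcb) hd with h | h
    · left
      exact Subtype.coe_le_coe.1
        ((lexP_le_iff _ _).2 (((sub_eq_zero.1 h) ▸ hcb : a ≤ b)))
    · right
      exact Subtype.coe_le_coe.1
        ((lexP_le_iff _ _).2 (((sub_eq_zero.1 h) ▸ hca : b ≤ a)))
end Anti
end LexSub

namespace LexSub
section Main
variable {H : Type*} {G : Type*} [AddCommGroup H] [PartialOrder H] [IsOrderedAddMonoid H]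
    [AddCommGroup G] [PartialOrder G] [IsOrderedAddMonoid G]

lemma lex_strong_unit {u : H} (hu : IsStrongUnit u) (hu0 : u ≠ 0) :
    IsStrongUnit (toLex (u, (0 : G))) := by
  constructor
  · exact (lex_nonneg_iff ((u, (0:G)))).2 (Or.inl (lt_of_le_of_ne hu.1 (Ne.symm hu0)))
  · intro g
    obtain ⟨p, rfl⟩ : ∃ p : H × G, toLex p = g := ⟨ofLex g, rfl⟩
    obtain ⟨n, hn⟩ := hu.2 p.1
    have key : ∃ m : ℕ, p.1 < m • u := by
      have h1 : p.1 ≤ (n + 1) • u := hn.trans (nsmul_le_nsmul_left hu.1 (Nat.le_succ n))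
      by_cases hEq : p.1 = (n + 1) • u
      · refine ⟨n + 2, ?_⟩
        have h2 : p.1 ≤ (n + 2) • u := h1.trans (nsmul_le_nsmul_left hu.1 (Nat.le_succ _))
        refine lt_of_le_of_ne h2 ?_
        intro hEq2
        apply hu0
        have h3 : (n + 1) • u + 0 = (n + 1) • u + u := by
          rw [add_zero, ← succ_nsmul u (n + 1), ← hEq2, hEq]
        exact (add_left_cancel h3).symm
      · exact ⟨n + 1, lt_of_le_of_ne h1 hEq⟩
    obtain ⟨m, hm⟩ := key
    refine ⟨m, ?_⟩
    have hsm : m • toLex ((u, (0:G))) = toLex ((m • u, (0:G))) := by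
      exact congrArg toLex (Prod.ext rfl (smul_zero m))
    rw [hsm]
    exact (lex_le_iff p ((m • u, (0:G)))).2 (Or.inl hm)

end Main
end LexSub



universe x y

/-- `E = Γ(H ×ₗ G, (u, 0))` is a subdirect product of a family of
antilattice interval effect algebras of the form `Γ(H_i ×ₗ G_i, (u_i, 0))`. -/
theorem lex_subdirect_product_of_antilattices {H : Type x} {G : Type y}
    [AddCommGroup H] [PartialOrder H] [IsOrderedAddMonoid H]
    [AddCommGroup G] [PartialOrder G] [IsOrderedAddMonoid G]
    (u : H) (hu : IsStrongUnit u) (hH : RDP H) (hG : IsDirectedGroup G) (hRG : RDP G) :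
    ∃ (ι : Type (max x y)) (Hf Gf : ι → Type (max x y))
      (_ : ∀ i, AddCommGroup (Hf i)) (_ : ∀ i, PartialOrder (Hf i)) (_ : ∀ i, IsOrderedAddMonoid (Hf i))
        (_ : ∀ i, AddCommGroup (Gf i)) (_ : ∀ i, PartialOrder (Gf i)) (_ : ∀ i, IsOrderedAddMonoid (Gf i))
      (uf : ∀ i, Hf i),
      (∀ i, IsStrongUnit (uf i) ∧ RDP (Hf i) ∧ IsDirectedGroup (Gf i) ∧ RDP (Gf i) ∧
        IsAntilattice ↥(Icc (0 : (Hf i) ×ₗ (Gf i)) (toLex (uf i, (0 : Gf i))))) ∧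
      ∃ Φ : H ×ₗ G → ∀ i, (Hf i) ×ₗ (Gf i),
        (∀ a ∈ Icc (0 : H ×ₗ G) (toLex (u, (0 : G))),
          ∀ i, Φ a i ∈ Icc (0 : (Hf i) ×ₗ (Gf i)) (toLex (uf i, (0 : Gf i)))) ∧
        (∀ a ∈ Icc (0 : H ×ₗ G) (toLex (u, (0 : G))),
          ∀ b ∈ Icc (0 : H ×ₗ G) (toLex (u, (0 : G))), Φ a = Φ b → a = b) ∧
        (∀ a ∈ Icc (0 : H ×ₗ G) (toLex (u, (0 : G))),
          ∀ b ∈ Icc (0 : H ×ₗ G) (toLex (u, (0 : G))),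
            ((∀ i, Φ a i ≤ Φ b i) ↔ a ≤ b)) ∧
        (∀ i, Φ (toLex (u, (0 : G))) i = toLex (uf i, (0 : Gf i))) ∧
        (∀ a ∈ Icc (0 : H ×ₗ G) (toLex (u, (0 : G))),
          ∀ b ∈ Icc (0 : H ×ₗ G) (toLex (u, (0 : G))), a + b ≤ toLex (u, (0 : G)) →
            ∀ i, Φ (a + b) i = Φ a i + Φ b i) ∧
        (∀ i, ∀ q ∈ Icc (0 : (Hf i) ×ₗ (Gf i)) (toLex (uf i, (0 : Gf i))),
          ∃ a ∈ Icc (0 : H ×ₗ G) (toLex (u, (0 : G))), Φ a i = q) := by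
  classical
  by_cases hu0 : u = 0
  · -- degenerate case: the interval is a singleton
    subst hu0
    have hE : ∀ a : H ×ₗ G, a ∈ Icc (0 : H ×ₗ G) (toLex ((0 : H), (0 : G))) → a = 0 := by
      intro a ha
      have h0 : toLex ((0 : H), (0 : G)) = (0 : H ×ₗ G) := rfl
      exact le_antisymm (h0 ▸ ha.2) ha.1
    have hPP : ∀ z w : PUnit.{(max x y) + 1} ×ₗ PUnit.{(max x y) + 1}, z = w := by
      intro z w
      exact congrArg toLex (Subsingleton.elim (ofLex z) (ofLex w))
    refine ⟨PUnit, fun _ => PUnit, fun _ => PUnit, fun _ => inferInstance,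
      fun _ => inferInstance, fun _ => inferInstance, fun _ => inferInstance,
      fun _ => inferInstance, fun _ => inferInstance, fun _ => 0, ?_, ?_⟩
    · intro i
      refine ⟨⟨le_rfl, fun g => ⟨0, le_of_eq (Subsingleton.elim _ _)⟩⟩,
        LexSub.punit_rdp, LexSub.punit_directed, LexSub.punit_rdp, ?_⟩
      intro A B _
      exact Or.inl (le_of_eq (Subtype.ext (hPP _ _)))
    · refine ⟨fun _ _ => 0, ?_, ?_, ?_, ?_, ?_, ?_⟩
      · intro a _ i
        exact ⟨le_of_eq (hPP _ _), le_of_eq (hPP _ _)⟩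
      · intro a ha b hb _
        rw [hE a ha, hE b hb]
      · intro a ha b hb
        constructor
        · intro _
          rw [hE a ha, hE b hb]
        · intro _ i
          exact le_of_eq (hPP _ _)
      · intro i
        exact hPP _ _
      · intro a _ b _ _ i
        exact hPP _ _
      · intro i q _
        exact ⟨0, ⟨le_rfl, le_of_eq rfl⟩, hPP _ _⟩
  · -- main case
    have hKRDP : RDP (H ×ₗ G) := LexSub.rdp_lex hH hG hRG
    have hvSU : IsStrongUnit (toLex (u, (0 : G))) := LexSub.lex_strong_unit hu hu0
    choose Sel hOId hAv hMax using
      fun i : {w : H ×ₗ G // ¬ w ≤ 0} => LexSub.exists_maximal_avoider i.2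
    refine ⟨{w : H ×ₗ G // ¬ w ≤ 0},
      fun i => (H ×ₗ G) ⧸ LexSub.subgrp (Sel i) (hOId i),
      fun _ => PUnit, fun i => inferInstance, fun i => inferInstance, fun i => inferInstance,
      fun _ => inferInstance, fun _ => inferInstance, fun _ => inferInstance,
      fun i => QuotientAddGroup.mk (toLex (u, (0 : G))), ?_, ?_⟩
    · intro i
      refine ⟨LexSub.qSU _ _ hvSU, LexSub.qRDP _ _ hKRDP,
        LexSub.punit_directed, LexSub.punit_rdp, ?_⟩
      show IsAntilattice
        ↥(Icc (0 : ((H ×ₗ G) ⧸ LexSub.subgrp (Sel i) (hOId i)) ×ₗ PUnit.{max x y + 1})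
          (toLex (QuotientAddGroup.mk (toLex (u, (0 : G))), 0)))
      exact LexSub.lex_punit_antilattice (LexSub.qRDP _ _ hKRDP)
        (fun p q hp hq hd => LexSub.fuchs_disj (Sel i) (hOId i) (hAv i) (hMax i) hp hq hd)
        (QuotientAddGroup.mk (toLex (u, (0 : G))))
    · have hmono : ∀ a b : H ×ₗ G, a ≤ b → ∀ i : {w : H ×ₗ G // ¬ w ≤ 0},
          (toLex ((QuotientAddGroup.mk a : (H ×ₗ G) ⧸ LexSub.subgrp (Sel i) (hOId i)), (0 : PUnit.{max x y + 1})))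
            ≤ toLex ((QuotientAddGroup.mk b : (H ×ₗ G) ⧸ LexSub.subgrp (Sel i) (hOId i)), (0 : PUnit.{max x y + 1})) := by
        intro a b hab i
        exact (LexSub.lexP_le_iff _ _).2 (LexSub.qle_mk _ _ hab)
      have hrefl : ∀ a b : H ×ₗ G, (∀ i : {w : H ×ₗ G // ¬ w ≤ 0},
          (toLex ((QuotientAddGroup.mk a : (H ×ₗ G) ⧸ LexSub.subgrp (Sel i) (hOId i)), (0 : PUnit.{max x y + 1})))
            ≤ toLex ((QuotientAddGroup.mk b : (H ×ₗ G) ⧸ LexSub.subgrp (Sel i) (hOId i)), (0 : PUnit.{max x y + 1})))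
          → a ≤ b := by
        intro a b h
        by_contra hab
        have hw : ¬ (a - b) ≤ 0 := fun hc => hab (sub_nonpos.1 hc)
        have h1 : (QuotientAddGroup.mk a :
            (H ×ₗ G) ⧸ LexSub.subgrp (Sel ⟨a - b, hw⟩) (hOId ⟨a - b, hw⟩))
              ≤ QuotientAddGroup.mk b :=
          (LexSub.lexP_le_iff _ _).1 (h ⟨a - b, hw⟩)
        obtain ⟨m, hm, hab'⟩ := LexSub.qle_dest _ _ h1
        exact hAv ⟨a - b, hw⟩ m hm (sub_le_iff_le_add.2 (hab'.trans_eq (add_comm b m)))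
      refine ⟨fun a i => toLex (QuotientAddGroup.mk a, 0), ?_, ?_, ?_, ?_, ?_, ?_⟩
      · intro a ha i
        constructor
        · exact (LexSub.lexP_le_iff _ _).2 (LexSub.qle_mk _ _ ha.1)
        · exact (LexSub.lexP_le_iff _ _).2 (LexSub.qle_mk _ _ ha.2)
      · intro a ha b hb hab
        exact le_antisymm
          (hrefl a b (fun i => le_of_eq (congrFun hab i)))
          (hrefl b a (fun i => le_of_eq (congrFun hab i).symm))
      · intro a ha b hb
        exact ⟨hrefl a b, fun h i => hmono a b h i⟩
      · intro i
        rfl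
      · intro a _ b _ _ i
        show toLex ((QuotientAddGroup.mk (a + b) :
              (H ×ₗ G) ⧸ LexSub.subgrp (Sel i) (hOId i)), (0 : PUnit.{max x y + 1}))
            = toLex (QuotientAddGroup.mk a, 0) + toLex (QuotientAddGroup.mk b, 0)
        exact congrArg toLex
          (show ((QuotientAddGroup.mk (a + b) :
              (H ×ₗ G) ⧸ LexSub.subgrp (Sel i) (hOId i)), (0 : PUnit.{max x y + 1}))
            = (QuotientAddGroup.mk a + QuotientAddGroup.mk b, 0 + 0) from
            Prod.ext (QuotientAddGroup.mk_add _ _ _) (Subsingleton.elim _ _))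
      · intro i q hq
        obtain ⟨a, h0, h1, hmk⟩ := LexSub.interval_lift (Sel i) (hOId i) hKRDP hvSU.1
          ((LexSub.lexP_le_iff _ _).1 hq.1) ((LexSub.lexP_le_iff _ _).1 hq.2)
        exact ⟨a, ⟨h0, h1⟩, congrArg toLex (Prod.ext hmk (Subsingleton.elim _ _))⟩
end
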